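/- arXiv:2604.22870 — 3 statements merged into one kernel-verified Lean document; each statement's English description precedes it below -/
import Mathlib

section
/- For all L ≥ 0, c ≥ 1, q ≥ 1, d ≥ 0 and every pointed d-featured graph (G₁, v₁), there exists a d-dimensional GML^∃ formula γ such that for every pointed d-featured graph (G₂, v₂): G₂, v₂ ⊨ γ if and only if G₁, v₁ ∼^{L,c,q}_∃ G₂, v₂. -/
/-- A `d`-featured directed graph: finite nonempty vertex set, edge relation,
and a feature map into `{0,1}^d` (represented as `Fin d → Bool`). -/
structure FGraph (d : ℕ) where
  V : Type
  [fintypeV : Fintype V]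
  nonemptyV : Nonempty V
  E : V → V → Prop
  f : V → Fin d → Bool

attribute [instance] FGraph.fintypeV

/-- `c`-graded `L`-turn bisimilarity between pointed `d`-featured graphs. -/
def bisim (d c : ℕ) : (L : ℕ) → (G₁ G₂ : FGraph d) → G₁.V → G₂.V → Prop
  | 0, G₁, G₂, v₁, v₂ => G₁.f v₁ = G₂.f v₂
  | L + 1, G₁, G₂, v₁, v₂ =>
      G₁.f v₁ = G₂.f v₂ ∧
      (∀ k, k ≤ c → ∀ u₁ : Fin k → G₁.V, Function.Injective u₁ →
        (∀ i, G₁.E v₁ (u₁ i)) →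
        ∃ u₂ : Fin k → G₂.V, Function.Injective u₂ ∧ (∀ i, G₂.E v₂ (u₂ i)) ∧
          ∀ i, bisim d c L G₁ G₂ (u₁ i) (u₂ i)) ∧
      (∀ k, k ≤ c → ∀ u₂ : Fin k → G₂.V, Function.Injective u₂ →
        (∀ i, G₂.E v₂ (u₂ i)) →
        ∃ u₁ : Fin k → G₁.V, Function.Injective u₁ ∧ (∀ i, G₁.E v₁ (u₁ i)) ∧
          ∀ i, bisim d c L G₁ G₂ (u₁ i) (u₂ i))

/-- `∼^{L,c,*}_∃` : `c`-graded `L`-turn bisimilarity with (unbounded) global counting. -/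
def bisimStar (d c L : ℕ) (G₁ G₂ : FGraph d) (v₁ : G₁.V) (v₂ : G₂.V) : Prop :=
  bisim d c L G₁ G₂ v₁ v₂ ∧
  (∀ u : G₁.V,
    Set.ncard {u₁ : G₁.V | bisim d c L G₁ G₁ u₁ u} =
      Set.ncard {u₂ : G₂.V | bisim d c L G₂ G₁ u₂ u}) ∧
  (∀ u : G₂.V,
    Set.ncard {u₁ : G₁.V | bisim d c L G₁ G₂ u₁ u} =
      Set.ncard {u₂ : G₂.V | bisim d c L G₂ G₂ u₂ u})

/-- `∼^{L,c,q}_∃` : `c`-graded `L`-turn bisimilarity with global counting bounded by `q`. -/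
def bisimQ (d c L q : ℕ) (G₁ G₂ : FGraph d) (v₁ : G₁.V) (v₂ : G₂.V) : Prop :=
  bisim d c L G₁ G₂ v₁ v₂ ∧
  (∀ u : G₁.V,
    min (Set.ncard {u₁ : G₁.V | bisim d c L G₁ G₁ u₁ u}) q =
      min (Set.ncard {u₂ : G₂.V | bisim d c L G₂ G₁ u₂ u}) q) ∧
  (∀ u : G₂.V,
    min (Set.ncard {u₁ : G₁.V | bisim d c L G₁ G₂ u₁ u}) q =
      min (Set.ncard {u₂ : G₂.V | bisim d c L G₂ G₂ u₂ u}) q)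
/-- Formulas of `d`-dimensional graded modal logic with graded global
(counting) modalities, `GML^∃`. -/
inductive GML (d : ℕ) : Type
  | top : GML d
  | prop : Fin d → GML d
  | not : GML d → GML d
  | and : GML d → GML d → GML d
  | dia : ℕ → GML d → GML d
  | ex : ℕ → GML d → GML d

/-- Satisfaction of a `GML^∃` formula at a vertex of a `d`-featured graph. -/
def GMLSat {d : ℕ} (G : FGraph d) : GML d → G.V → Prop
  | .top, _ => True
  | .prop i, v => G.f v i = true
  | .not φ, v => ¬ GMLSat G φ v
  | .and φ ψ, v => GMLSat G φ v ∧ GMLSat G ψ v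
  | .dia k φ, v => k ≤ Set.ncard {u : G.V | G.E v u ∧ GMLSat G φ u}
  | .ex k φ, _ => k ≤ Set.ncard {u : G.V | GMLSat G φ u}


section Aux

open Function

/-- Reflexivity of `bisim`. -/
lemma bisim_refl (d c : ℕ) : ∀ (L : ℕ) (G : FGraph d) (v : G.V), bisim d c L G G v v := by
  intro L
  induction L with
  | zero => intro G v; simp [bisim]
  | succ L ih =>
    intro G v
    refine ⟨rfl, ?_, ?_⟩ <;>
    · intro k hk u hu hE
      exact ⟨u, hu, hE, fun i => ih G (u i)⟩

/-- Symmetry of `bisim`. -/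
lemma bisim_symm (d c : ℕ) : ∀ (L : ℕ) (G₁ G₂ : FGraph d) (v₁ : G₁.V) (v₂ : G₂.V),
    bisim d c L G₁ G₂ v₁ v₂ → bisim d c L G₂ G₁ v₂ v₁ := by
  intro L
  induction L with
  | zero => intro G₁ G₂ v₁ v₂ h; exact h.symm
  | succ L ih =>
    intro G₁ G₂ v₁ v₂ h
    obtain ⟨hf, hforth, hback⟩ := h
    refine ⟨hf.symm, ?_, ?_⟩
    · intro k hk u₂ hu₂ hE₂
      obtain ⟨u₁, hu₁, hE₁, hb⟩ := hback k hk u₂ hu₂ hE₂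
      exact ⟨u₁, hu₁, hE₁, fun i => ih _ _ _ _ (hb i)⟩
    · intro k hk u₁ hu₁ hE₁
      obtain ⟨u₂, hu₂, hE₂, hb⟩ := hforth k hk u₁ hu₁ hE₁
      exact ⟨u₂, hu₂, hE₂, fun i => ih _ _ _ _ (hb i)⟩

/-- Transitivity of `bisim`. -/
lemma bisim_trans (d c : ℕ) : ∀ (L : ℕ) (G₁ G₂ G₃ : FGraph d) (v₁ : G₁.V) (v₂ : G₂.V)
    (v₃ : G₃.V), bisim d c L G₁ G₂ v₁ v₂ → bisim d c L G₂ G₃ v₂ v₃ →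
    bisim d c L G₁ G₃ v₁ v₃ := by
  intro L
  induction L with
  | zero => intro _ _ _ _ _ _ h h'; exact h.trans h'
  | succ L ih =>
    intro G₁ G₂ G₃ v₁ v₂ v₃ h h'
    obtain ⟨hf, hforth, hback⟩ := h
    obtain ⟨hf', hforth', hback'⟩ := h'
    refine ⟨hf.trans hf', ?_, ?_⟩
    · intro k hk u₁ hu₁ hE₁
      obtain ⟨u₂, hu₂, hE₂, hb⟩ := hforth k hk u₁ hu₁ hE₁
      obtain ⟨u₃, hu₃, hE₃, hb'⟩ := hforth' k hk u₂ hu₂ hE₂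
      exact ⟨u₃, hu₃, hE₃, fun i => ih _ _ _ _ _ _ (hb i) (hb' i)⟩
    · intro k hk u₃ hu₃ hE₃
      obtain ⟨u₂, hu₂, hE₂, hb'⟩ := hback' k hk u₃ hu₃ hE₃
      obtain ⟨u₁, hu₁, hE₁, hb⟩ := hback k hk u₂ hu₂ hE₂
      exact ⟨u₁, hu₁, hE₁, fun i => ih _ _ _ _ _ _ (hb i) (hb' i)⟩

/-- Counting lemma: `k ≤ S.ncard` iff there are `k` distinct elements of `S`. -/
lemma ncard_le_iff {V : Type} [Fintype V] (S : Set V) (k : ℕ) :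
    k ≤ S.ncard ↔ ∃ u : Fin k → V, Function.Injective u ∧ ∀ i, u i ∈ S := by
  classical
  rw [Set.ncard_eq_toFinset_card' S]
  constructor
  · intro h
    obtain ⟨t, hts, htc⟩ := Finset.exists_subset_card_eq h
    refine ⟨fun i => (t.equivFin.symm (Fin.cast htc.symm i) : V), ?_, ?_⟩
    · intro i j hij
      have := t.equivFin.symm.injective (Subtype.ext hij)
      simpa [Fin.ext_iff] using congrArg Fin.val this
    · intro i
      have := (t.equivFin.symm (Fin.cast htc.symm i)).2
      exact Set.mem_toFinset.mp (hts this)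
  · rintro ⟨u, hu, hmem⟩
    calc k = (Finset.univ : Finset (Fin k)).card := by simp
    _ ≤ S.toFinset.card := Finset.card_le_card_of_injOn u
        (fun i _ => Set.mem_toFinset.mpr (hmem i)) (hu.injOn)

end Aux

section Formulas

/-- Disjunction. -/
def GML.or {d : ℕ} (φ ψ : GML d) : GML d := GML.not (GML.and (GML.not φ) (GML.not ψ))

/-- Big conjunction. -/
def bigAnd {d : ℕ} (l : List (GML d)) : GML d := l.foldr .and .top

/-- Big disjunction. -/
def bigOr {d : ℕ} (l : List (GML d)) : GML d := l.foldr .or (.not .top)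

@[simp] lemma sat_or {d : ℕ} (G : FGraph d) (φ ψ : GML d) (v : G.V) :
    GMLSat G (φ.or ψ) v ↔ GMLSat G φ v ∨ GMLSat G ψ v := by
  simp [GML.or, GMLSat]; tauto

@[simp] lemma sat_bigAnd {d : ℕ} (G : FGraph d) (l : List (GML d)) (v : G.V) :
    GMLSat G (bigAnd l) v ↔ ∀ φ ∈ l, GMLSat G φ v := by
  induction l with
  | nil => simp [bigAnd, GMLSat]
  | cons a l ih => simp [bigAnd, GMLSat] at ih ⊢; tauto

@[simp] lemma sat_bigOr {d : ℕ} (G : FGraph d) (l : List (GML d)) (v : G.V) :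
    GMLSat G (bigOr l) v ↔ ∃ φ ∈ l, GMLSat G φ v := by
  induction l with
  | nil => simp [bigOr, GMLSat]
  | cons a l ih =>
    rw [bigOr, List.foldr_cons, sat_or]
    rw [bigOr] at ih
    rw [ih]
    simp

/-- Formula describing the feature vector. -/
def featForm {d : ℕ} (b : Fin d → Bool) : GML d :=
  bigAnd ((List.finRange d).map fun i => if b i then .prop i else .not (.prop i))

lemma sat_featForm {d : ℕ} (G : FGraph d) (b : Fin d → Bool) (v : G.V) :
    GMLSat G (featForm b) v ↔ G.f v = b := by
  rw [featForm, sat_bigAnd]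
  simp only [List.mem_map, List.mem_finRange, true_and]
  constructor
  · intro h
    funext i
    have := h _ ⟨i, rfl⟩
    by_cases hb : b i
    · simpa [hb, GMLSat] using this
    · simp only [hb, if_false, GMLSat] at this
      simp only [hb]
      exact Bool.eq_false_iff.mpr (fun hc => this (by simpa [GMLSat] using hc))
  · rintro h φ ⟨i, rfl⟩
    by_cases hb : b i <;> simp [hb, GMLSat, h]

end Formulas

section Hall

/-- Auxiliary counting lemma towards Hall's condition. -/
lemma hall_aux {ι α : Type*} [DecidableEq ι] [DecidableEq α] (T : ι → Finset α)
    (r : ι → ι → Prop) [DecidableRel r] (hrefl : ∀ i, r i i)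
    (heq : ∀ i j, r i j → T i = T j)
    (hdisj : ∀ i j, ¬ r i j → Disjoint (T i) (T j)) :
    ∀ s : Finset ι, (∀ i ∈ s, (s.filter (r i)).card ≤ (T i).card) →
      s.card ≤ (s.biUnion T).card := by
  intro s
  induction s using Finset.strongInduction with
  | _ s IH =>
    intro hcard
    rcases s.eq_empty_or_nonempty with rfl | ⟨i, hi⟩
    · simp
    · set s' := s.filter (fun j => ¬ r i j) with hs'
      have hsplit : s.card = (s.filter (r i)).card + s'.card := by
        rw [hs']
        exact (Finset.card_filter_add_card_filter_not _).symm
      have hss : s' ⊂ s := by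
        refine Finset.ssubset_iff_of_subset (Finset.filter_subset _ _) |>.mpr ?_
        exact ⟨i, hi, by simp [hs', hrefl i]⟩
      have hbi : s.biUnion T = T i ∪ s'.biUnion T := by
        apply Finset.Subset.antisymm
        · intro a ha
          obtain ⟨j, hj, haj⟩ := Finset.mem_biUnion.mp ha
          by_cases hrij : r i j
          · exact Finset.mem_union_left _ (heq i j hrij ▸ haj)
          · exact Finset.mem_union_right _ (Finset.mem_biUnion.mpr
              ⟨j, by simp [hs', hj, hrij], haj⟩)
        · apply Finset.union_subset
          · exact Finset.subset_biUnion_of_mem T hi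
          · exact Finset.biUnion_subset_biUnion_of_subset_left T hss.subset
      have h2 : s'.card ≤ (s'.biUnion T).card := by
        apply IH s' hss
        intro j hj
        exact le_trans (Finset.card_le_card
          (Finset.filter_subset_filter _ hss.subset)) (hcard j (hss.subset hj))
      have hdisj' : Disjoint (T i) (s'.biUnion T) := by
        rw [Finset.disjoint_biUnion_right]
        intro j hj
        exact hdisj i j (by simp [hs'] at hj; exact hj.2)
      calc s.card = (s.filter (r i)).card + s'.card := hsplit
        _ ≤ (T i).card + (s'.biUnion T).card := add_le_add (hcard i hi) h2
        _ = (T i ∪ s'.biUnion T).card := (Finset.card_union_of_disjoint hdisj').symm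
        _ = (s.biUnion T).card := by rw [hbi]

end Hall

section Counts

/-- Number of out-neighbours of `w` in `G₁` that are `L`-bisimilar to `x`. -/
noncomputable def nSucc (d c L : ℕ) (G₁ : FGraph d) (w x : G₁.V) : ℕ :=
  Set.ncard {u : G₁.V | G₁.E w u ∧ bisim d c L G₁ G₁ u x}

/-- Number of out-neighbours of `v₂` in `G₂` that are `L`-bisimilar to `x : G₁.V`. -/
noncomputable def nSucc₂ (d c L : ℕ) (G₁ G₂ : FGraph d) (v₂ : G₂.V) (x : G₁.V) : ℕ :=
  Set.ncard {y : G₂.V | G₂.E v₂ y ∧ bisim d c L G₁ G₂ x y}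

lemma forth_of_counts (d c L : ℕ) (G₁ G₂ : FGraph d) (w : G₁.V) (v₂ : G₂.V)
    (hmin : ∀ x : G₁.V, G₁.E w x →
      min (nSucc d c L G₁ w x) c ≤ nSucc₂ d c L G₁ G₂ v₂ x) :
    ∀ k, k ≤ c → ∀ u₁ : Fin k → G₁.V, Function.Injective u₁ → (∀ i, G₁.E w (u₁ i)) →
      ∃ u₂ : Fin k → G₂.V, Function.Injective u₂ ∧ (∀ i, G₂.E v₂ (u₂ i)) ∧
        ∀ i, bisim d c L G₁ G₂ (u₁ i) (u₂ i) := by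
  classical
  intro k hk u₁ hu₁ hE₁
  set T : Fin k → Finset G₂.V := fun i =>
    (Set.toFinite {y : G₂.V | G₂.E v₂ y ∧ bisim d c L G₁ G₂ (u₁ i) y}).toFinset with hT
  have hmemT : ∀ i y, y ∈ T i ↔ G₂.E v₂ y ∧ bisim d c L G₁ G₂ (u₁ i) y := by
    intro i y; simp [hT, Set.Finite.mem_toFinset]
  have hall : ∀ s : Finset (Fin k), s.card ≤ (s.biUnion T).card := by
    intro s
    apply hall_aux T (fun i j => bisim d c L G₁ G₁ (u₁ i) (u₁ j))
    · intro i; exact bisim_refl d c L G₁ (u₁ i)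
    · intro i j hij
      ext y
      rw [hmemT, hmemT]
      constructor
      · rintro ⟨hE, hb⟩
        exact ⟨hE, bisim_trans d c L G₁ G₁ G₂ _ _ _ (bisim_symm d c L _ _ _ _ hij) hb⟩
      · rintro ⟨hE, hb⟩
        exact ⟨hE, bisim_trans d c L G₁ G₁ G₂ _ _ _ hij hb⟩
    · intro i j hij
      rw [Finset.disjoint_left]
      intro y hy1 hy2
      rw [hmemT] at hy1 hy2
      exact hij (bisim_trans d c L G₁ G₂ G₁ _ _ _ hy1.2 (bisim_symm d c L _ _ _ _ hy2.2))
    · intro i hi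
      have hTcard : (T i).card = nSucc₂ d c L G₁ G₂ v₂ (u₁ i) := by
        rw [nSucc₂, Set.ncard_eq_toFinset_card _ (Set.toFinite _)]
      have h1 : (s.filter (fun j => bisim d c L G₁ G₁ (u₁ i) (u₁ j))).card ≤
          nSucc d c L G₁ w (u₁ i) := by
        rw [nSucc, Set.ncard_eq_toFinset_card _ (Set.toFinite _)]
        apply Finset.card_le_card_of_injOn u₁
        · intro j hj
          rw [Finset.mem_coe, Finset.mem_filter] at hj
          rw [Finset.mem_coe, Set.Finite.mem_toFinset]
          exact ⟨hE₁ j, bisim_symm d c L _ _ _ _ hj.2⟩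
        · exact hu₁.injOn
      have h2 : (s.filter (fun j => bisim d c L G₁ G₁ (u₁ i) (u₁ j))).card ≤ c := by
        calc (s.filter (fun j => bisim d c L G₁ G₁ (u₁ i) (u₁ j))).card
            ≤ (Finset.univ : Finset (Fin k)).card :=
              Finset.card_le_card (Finset.subset_univ _)
          _ = k := Finset.card_fin k
          _ ≤ c := hk
      rw [hTcard]
      exact le_trans (le_min h1 h2) (hmin (u₁ i) (hE₁ i))
  obtain ⟨f, hf, hfmem⟩ := (Finset.all_card_le_biUnion_card_iff_exists_injective T).mp hall
  exact ⟨f, hf, fun i => ((hmemT i (f i)).mp (hfmem i)).1,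
    fun i => ((hmemT i (f i)).mp (hfmem i)).2⟩

end Counts

section Counts2

lemma back_of_counts (d c L : ℕ) (G₁ G₂ : FGraph d) (w : G₁.V) (v₂ : G₂.V)
    (hmax : ∀ x : G₁.V, G₁.E w x →
      min (nSucc₂ d c L G₁ G₂ v₂ x) c ≤ nSucc d c L G₁ w x)
    (hcover : ∀ y : G₂.V, G₂.E v₂ y → ∃ x : G₁.V, G₁.E w x ∧ bisim d c L G₁ G₂ x y) :
    ∀ k, k ≤ c → ∀ u₂ : Fin k → G₂.V, Function.Injective u₂ → (∀ i, G₂.E v₂ (u₂ i)) →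
      ∃ u₁ : Fin k → G₁.V, Function.Injective u₁ ∧ (∀ i, G₁.E w (u₁ i)) ∧
        ∀ i, bisim d c L G₁ G₂ (u₁ i) (u₂ i) := by
  classical
  intro k hk u₂ hu₂ hE₂
  choose x hxE hxb using fun i => hcover (u₂ i) (hE₂ i)
  set T : Fin k → Finset G₁.V := fun i =>
    (Set.toFinite {u : G₁.V | G₁.E w u ∧ bisim d c L G₁ G₂ u (u₂ i)}).toFinset with hT
  have hmemT : ∀ i u, u ∈ T i ↔ G₁.E w u ∧ bisim d c L G₁ G₂ u (u₂ i) := by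
    intro i u; simp [hT, Set.Finite.mem_toFinset]
  have hall : ∀ s : Finset (Fin k), s.card ≤ (s.biUnion T).card := by
    intro s
    apply hall_aux T (fun i j => bisim d c L G₂ G₂ (u₂ i) (u₂ j))
    · intro i; exact bisim_refl d c L G₂ (u₂ i)
    · intro i j hij
      ext u
      rw [hmemT, hmemT]
      constructor
      · rintro ⟨hE, hb⟩
        exact ⟨hE, bisim_trans d c L G₁ G₂ G₂ _ _ _ hb hij⟩
      · rintro ⟨hE, hb⟩
        exact ⟨hE, bisim_trans d c L G₁ G₂ G₂ _ _ _ hb (bisim_symm d c L _ _ _ _ hij)⟩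
    · intro i j hij
      rw [Finset.disjoint_left]
      intro u hu1 hu2
      rw [hmemT] at hu1 hu2
      exact hij (bisim_trans d c L G₂ G₁ G₂ _ _ _ (bisim_symm d c L _ _ _ _ hu1.2) hu2.2)
    · intro i hi
      have hTcard : (T i).card = nSucc d c L G₁ w (x i) := by
        rw [nSucc, Set.ncard_eq_toFinset_card _ (Set.toFinite _)]
        apply Finset.card_nbij id
        · intro u hu
          rw [Finset.mem_coe, hmemT] at hu
          rw [Finset.mem_coe, Set.Finite.mem_toFinset]
          exact ⟨hu.1, bisim_trans d c L G₁ G₂ G₁ _ _ _ hu.2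
            (bisim_symm d c L _ _ _ _ (hxb i))⟩
        · exact Set.injOn_id _
        · intro u hu
          rw [Set.Finite.coe_toFinset] at hu
          refine ⟨u, ?_, rfl⟩
          rw [Finset.mem_coe, hmemT]
          exact ⟨hu.1, bisim_trans d c L G₁ G₁ G₂ _ _ _ hu.2 (hxb i)⟩
      have h1 : (s.filter (fun j => bisim d c L G₂ G₂ (u₂ i) (u₂ j))).card ≤
          nSucc₂ d c L G₁ G₂ v₂ (x i) := by
        rw [nSucc₂, Set.ncard_eq_toFinset_card _ (Set.toFinite _)]
        apply Finset.card_le_card_of_injOn u₂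
        · intro j hj
          rw [Finset.mem_coe, Finset.mem_filter] at hj
          rw [Finset.mem_coe, Set.Finite.mem_toFinset]
          exact ⟨hE₂ j, bisim_trans d c L G₁ G₂ G₂ _ _ _ (hxb i) hj.2⟩
        · exact hu₂.injOn
      have h2 : (s.filter (fun j => bisim d c L G₂ G₂ (u₂ i) (u₂ j))).card ≤ c := by
        calc (s.filter (fun j => bisim d c L G₂ G₂ (u₂ i) (u₂ j))).card
            ≤ (Finset.univ : Finset (Fin k)).card :=
              Finset.card_le_card (Finset.subset_univ _)
          _ = k := Finset.card_fin k
          _ ≤ c := hk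
      rw [hTcard]
      exact le_trans (le_min h1 h2) (hmax (x i) (hxE i))
  obtain ⟨f, hf, hfmem⟩ := (Finset.all_card_le_biUnion_card_iff_exists_injective T).mp hall
  exact ⟨f, hf, fun i => ((hmemT i (f i)).mp (hfmem i)).1,
    fun i => ((hmemT i (f i)).mp (hfmem i)).2⟩

end Counts2

section Counts3

lemma counts_of_forth (d c L : ℕ) (G₁ G₂ : FGraph d) (w : G₁.V) (v₂ : G₂.V)
    (hforth : ∀ k, k ≤ c → ∀ u₁ : Fin k → G₁.V, Function.Injective u₁ →
      (∀ i, G₁.E w (u₁ i)) →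
      ∃ u₂ : Fin k → G₂.V, Function.Injective u₂ ∧ (∀ i, G₂.E v₂ (u₂ i)) ∧
        ∀ i, bisim d c L G₁ G₂ (u₁ i) (u₂ i)) (x : G₁.V) :
    min (nSucc d c L G₁ w x) c ≤ nSucc₂ d c L G₁ G₂ v₂ x := by
  set k := min (nSucc d c L G₁ w x) c with hkdef
  have hk1 : k ≤ nSucc d c L G₁ w x := min_le_left _ _
  obtain ⟨u₁, hu₁, hmem₁⟩ := (ncard_le_iff _ k).mp hk1
  obtain ⟨u₂, hu₂, hE₂, hb⟩ := hforth k (min_le_right _ _) u₁ hu₁ (fun i => (hmem₁ i).1)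
  apply (ncard_le_iff _ k).mpr
  refine ⟨u₂, hu₂, fun i => ⟨hE₂ i, ?_⟩⟩
  exact bisim_trans d c L G₁ G₁ G₂ _ _ _ (bisim_symm d c L _ _ _ _ (hmem₁ i).2) (hb i)

lemma counts_of_back (d c L : ℕ) (G₁ G₂ : FGraph d) (w : G₁.V) (v₂ : G₂.V)
    (hback : ∀ k, k ≤ c → ∀ u₂ : Fin k → G₂.V, Function.Injective u₂ →
      (∀ i, G₂.E v₂ (u₂ i)) →
      ∃ u₁ : Fin k → G₁.V, Function.Injective u₁ ∧ (∀ i, G₁.E w (u₁ i)) ∧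
        ∀ i, bisim d c L G₁ G₂ (u₁ i) (u₂ i)) (x : G₁.V) :
    min (nSucc₂ d c L G₁ G₂ v₂ x) c ≤ nSucc d c L G₁ w x := by
  set k := min (nSucc₂ d c L G₁ G₂ v₂ x) c with hkdef
  have hk1 : k ≤ nSucc₂ d c L G₁ G₂ v₂ x := min_le_left _ _
  obtain ⟨u₂, hu₂, hmem₂⟩ := (ncard_le_iff _ k).mp hk1
  obtain ⟨u₁, hu₁, hE₁, hb⟩ := hback k (min_le_right _ _) u₂ hu₂ (fun i => (hmem₂ i).1)
  apply (ncard_le_iff _ k).mpr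
  refine ⟨u₁, hu₁, fun i => ⟨hE₁ i, ?_⟩⟩
  exact bisim_trans d c L G₁ G₂ G₁ _ _ _ (hb i) (bisim_symm d c L _ _ _ _ (hmem₂ i).2)

lemma cover_of_back (d c L : ℕ) (hc : 1 ≤ c) (G₁ G₂ : FGraph d) (w : G₁.V) (v₂ : G₂.V)
    (hback : ∀ k, k ≤ c → ∀ u₂ : Fin k → G₂.V, Function.Injective u₂ →
      (∀ i, G₂.E v₂ (u₂ i)) →
      ∃ u₁ : Fin k → G₁.V, Function.Injective u₁ ∧ (∀ i, G₁.E w (u₁ i)) ∧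
        ∀ i, bisim d c L G₁ G₂ (u₁ i) (u₂ i))
    (y : G₂.V) (hy : G₂.E v₂ y) :
    ∃ x : G₁.V, G₁.E w x ∧ bisim d c L G₁ G₂ x y := by
  obtain ⟨u₁, _, hE₁, hb⟩ := hback 1 hc (fun _ => y)
    (Function.injective_of_subsingleton _) (fun _ => hy)
  exact ⟨u₁ 0, hE₁ 0, hb 0⟩

end Counts3

section Chi

/-- The (finite) list of out-neighbours of `w`. -/
noncomputable def succList {d : ℕ} (G : FGraph d) (w : G.V) : List G.V :=
  (Set.toFinite {u : G.V | G.E w u}).toFinset.toList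

lemma mem_succList {d : ℕ} (G : FGraph d) (w x : G.V) :
    x ∈ succList G w ↔ G.E w x := by
  rw [succList, Finset.mem_toList, Set.Finite.mem_toFinset]
  rfl

/-- The characteristic formula of `w : G₁.V` for `L`-turn `c`-graded bisimilarity. -/
noncomputable def chi (d c : ℕ) (G₁ : FGraph d) : ℕ → G₁.V → GML d
  | 0, w => featForm (G₁.f w)
  | L + 1, w =>
      (featForm (G₁.f w)).and <|
      (bigAnd ((succList G₁ w).map fun x =>
        (GML.dia (min (nSucc d c L G₁ w x) c) (chi d c G₁ L x)).and
        (if nSucc d c L G₁ w x < c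
          then GML.not (GML.dia (nSucc d c L G₁ w x + 1) (chi d c G₁ L x))
          else GML.top))).and <|
      GML.not (GML.dia 1 (GML.not (bigOr ((succList G₁ w).map (chi d c G₁ L)))))

/-- The characteristic formula characterizes bisimilarity. -/
lemma chi_spec (d c : ℕ) (hc : 1 ≤ c) (G₁ : FGraph d) :
    ∀ (L : ℕ) (w : G₁.V) (G₂ : FGraph d) (v₂ : G₂.V),
      GMLSat G₂ (chi d c G₁ L w) v₂ ↔ bisim d c L G₁ G₂ w v₂ := by
  intro L
  induction L with
  | zero =>
    intro w G₂ v₂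
    rw [chi, show bisim d c 0 G₁ G₂ w v₂ ↔ G₁.f w = G₂.f v₂ from Iff.rfl, sat_featForm]
    exact ⟨fun h => h.symm, fun h => h.symm⟩
  | succ L ih =>
    intro w G₂ v₂
    constructor
    · rintro ⟨hfeat, hconj, hcov⟩
      have hf : G₁.f w = G₂.f v₂ := (sat_featForm G₂ _ v₂).mp hfeat |>.symm
      -- extract the counting facts
      have hcounts : ∀ x : G₁.V, G₁.E w x →
          min (nSucc d c L G₁ w x) c ≤ nSucc₂ d c L G₁ G₂ v₂ x ∧
          (nSucc d c L G₁ w x < c → nSucc₂ d c L G₁ G₂ v₂ x ≤ nSucc d c L G₁ w x) := by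
        intro x hx
        rw [sat_bigAnd] at hconj
        have := hconj _ (List.mem_map.mpr ⟨x, (mem_succList G₁ w x).mpr hx, rfl⟩)
        obtain ⟨h1, h2⟩ := this
        have hset : {u : G₂.V | G₂.E v₂ u ∧ GMLSat G₂ (chi d c G₁ L x) u} =
            {y : G₂.V | G₂.E v₂ y ∧ bisim d c L G₁ G₂ x y} := by
          ext y; exact and_congr_right fun _ => ih x G₂ y
        constructor
        · have := h1
          rw [show GMLSat G₂ (GML.dia (min (nSucc d c L G₁ w x) c) (chi d c G₁ L x)) v₂ ↔
            min (nSucc d c L G₁ w x) c ≤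
              Set.ncard {u : G₂.V | G₂.E v₂ u ∧ GMLSat G₂ (chi d c G₁ L x) u} from Iff.rfl,
            hset] at this
          exact this
        · intro hlt
          rw [if_pos hlt] at h2
          have h2' : ¬ (nSucc d c L G₁ w x + 1 ≤
              Set.ncard {u : G₂.V | G₂.E v₂ u ∧ GMLSat G₂ (chi d c G₁ L x) u}) := h2
          rw [hset] at h2'
          rw [show Set.ncard {y : G₂.V | G₂.E v₂ y ∧ bisim d c L G₁ G₂ x y} =
            nSucc₂ d c L G₁ G₂ v₂ x from rfl] at h2'
          omega
      have hcover : ∀ y : G₂.V, G₂.E v₂ y →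
          ∃ x : G₁.V, G₁.E w x ∧ bisim d c L G₁ G₂ x y := by
        intro y hy
        by_contra hno
        push_neg at hno
        apply hcov
        rw [show GMLSat G₂ (GML.dia 1 (GML.not (bigOr ((succList G₁ w).map (chi d c G₁ L))))) v₂
          ↔ 1 ≤ Set.ncard {u : G₂.V | G₂.E v₂ u ∧
            GMLSat G₂ (GML.not (bigOr ((succList G₁ w).map (chi d c G₁ L)))) u} from Iff.rfl]
        apply (ncard_le_iff _ 1).mpr
        refine ⟨fun _ => y, Function.injective_of_subsingleton _, fun _ => ⟨hy, ?_⟩⟩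
        intro hsat
        rw [show GMLSat G₂ (bigOr ((succList G₁ w).map (chi d c G₁ L))) y ↔
          ∃ φ ∈ (succList G₁ w).map (chi d c G₁ L), GMLSat G₂ φ y from sat_bigOr _ _ _] at hsat
        obtain ⟨φ, hφ, hsatφ⟩ := hsat
        obtain ⟨x, hxmem, rfl⟩ := List.mem_map.mp hφ
        exact hno x ((mem_succList G₁ w x).mp hxmem) ((ih x G₂ y).mp hsatφ)
      refine ⟨hf, ?_, ?_⟩
      · exact forth_of_counts d c L G₁ G₂ w v₂ (fun x hx => (hcounts x hx).1)
      · apply back_of_counts d c L G₁ G₂ w v₂ ?_ hcover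
        intro x hx
        obtain ⟨h1, h2⟩ := hcounts x hx
        by_cases hlt : nSucc d c L G₁ w x < c
        · exact le_trans (min_le_left _ _) (h2 hlt)
        · exact le_trans (min_le_right _ _) (le_of_not_gt hlt)
    · rintro ⟨hf, hforth, hback⟩
      have hforthC := fun x => counts_of_forth d c L G₁ G₂ w v₂ hforth x
      have hbackC := fun x => counts_of_back d c L G₁ G₂ w v₂ hback x
      refine ⟨(sat_featForm G₂ _ v₂).mpr hf.symm, ?_, ?_⟩
      · rw [sat_bigAnd]
        intro φ hφ
        obtain ⟨x, hxmem, rfl⟩ := List.mem_map.mp hφ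
        have hx : G₁.E w x := (mem_succList G₁ w x).mp hxmem
        have hset : {u : G₂.V | G₂.E v₂ u ∧ GMLSat G₂ (chi d c G₁ L x) u} =
            {y : G₂.V | G₂.E v₂ y ∧ bisim d c L G₁ G₂ x y} := by
          ext y; exact and_congr_right fun _ => ih x G₂ y
        constructor
        · show min (nSucc d c L G₁ w x) c ≤ Set.ncard _
          rw [hset]
          exact hforthC x
        · by_cases hlt : nSucc d c L G₁ w x < c
          · rw [if_pos hlt]
            show ¬ (nSucc d c L G₁ w x + 1 ≤ Set.ncard _)
            rw [hset, show Set.ncard {y : G₂.V | G₂.E v₂ y ∧ bisim d c L G₁ G₂ x y} =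
              nSucc₂ d c L G₁ G₂ v₂ x from rfl]
            have := hbackC x
            omega
          · rw [if_neg hlt]
            trivial
      · intro hsat
        have h1 : 1 ≤ Set.ncard {u : G₂.V | G₂.E v₂ u ∧
            GMLSat G₂ (GML.not (bigOr ((succList G₁ w).map (chi d c G₁ L)))) u} := hsat
        obtain ⟨u, _, hmem⟩ := (ncard_le_iff _ 1).mp h1
        obtain ⟨hyE, hynot⟩ := hmem 0
        obtain ⟨x, hxE, hxb⟩ := cover_of_back d c L hc G₁ G₂ w v₂ hback (u 0) hyE
        apply hynot
        rw [sat_bigOr]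
        exact ⟨chi d c G₁ L x, List.mem_map.mpr ⟨x, (mem_succList G₁ w x).mpr hxE, rfl⟩,
          (ih x G₂ (u 0)).mpr hxb⟩

end Chi

section Main

/-- The list of all vertices. -/
noncomputable def vertList {d : ℕ} (G : FGraph d) : List G.V :=
  (Finset.univ : Finset G.V).toList

lemma mem_vertList {d : ℕ} (G : FGraph d) (x : G.V) : x ∈ vertList G := by
  rw [vertList, Finset.mem_toList]
  exact Finset.mem_univ x

theorem stmt13' (d c L q : ℕ) (hc : 1 ≤ c) (hq : 1 ≤ q)
    (G₁ : FGraph d) (v₁ : G₁.V) :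
    ∃ γ : GML d, ∀ (G₂ : FGraph d) (v₂ : G₂.V),
      GMLSat G₂ γ v₂ ↔ bisimQ d c L q G₁ G₂ v₁ v₂ := by
  set N₁ : G₁.V → ℕ := fun u => Set.ncard {u₁ : G₁.V | bisim d c L G₁ G₁ u₁ u} with hN₁
  refine ⟨(chi d c G₁ L v₁).and <|
    (bigAnd ((vertList G₁).map fun u =>
      (GML.ex (min (N₁ u) q) (chi d c G₁ L u)).and
      (if N₁ u < q then GML.not (GML.ex (N₁ u + 1) (chi d c G₁ L u)) else GML.top))).and <|
    GML.not (GML.ex 1 (GML.not (bigOr ((vertList G₁).map (chi d c G₁ L))))), ?_⟩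
  intro G₂ v₂
  have hsetchi : ∀ u : G₁.V, {v : G₂.V | GMLSat G₂ (chi d c G₁ L u) v} =
      {u₂ : G₂.V | bisim d c L G₂ G₁ u₂ u} := by
    intro u
    ext v
    rw [Set.mem_setOf_eq, Set.mem_setOf_eq, chi_spec d c hc G₁ L u G₂ v]
    exact ⟨fun h => bisim_symm d c L _ _ _ _ h, fun h => bisim_symm d c L _ _ _ _ h⟩
  set N₂ : G₁.V → ℕ := fun u => Set.ncard {u₂ : G₂.V | bisim d c L G₂ G₁ u₂ u} with hN₂
  constructor
  · rintro ⟨h1, h2, h3⟩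
    have hb : bisim d c L G₁ G₂ v₁ v₂ := (chi_spec d c hc G₁ L v₁ G₂ v₂).mp h1
    have hcnt : ∀ u : G₁.V, min (N₁ u) q = min (N₂ u) q := by
      intro u
      rw [sat_bigAnd] at h2
      obtain ⟨ha, hb'⟩ := h2 _ (List.mem_map.mpr ⟨u, mem_vertList G₁ u, rfl⟩)
      have ha' : min (N₁ u) q ≤ N₂ u := by
        have : min (N₁ u) q ≤ Set.ncard {v : G₂.V | GMLSat G₂ (chi d c G₁ L u) v} := ha
        rw [hsetchi u] at this
        exact this
      have ha'' : min (N₁ u) q ≤ N₂ u := ha'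
      by_cases hlt : N₁ u < q
      · rw [if_pos hlt] at hb'
        have hb'' : ¬ (N₁ u + 1 ≤ Set.ncard {v : G₂.V | GMLSat G₂ (chi d c G₁ L u) v}) := hb'
        rw [hsetchi u] at hb''
        have hb''' : ¬ (N₁ u + 1 ≤ N₂ u) := hb''
        omega
      · omega
    have hcov : ∀ v : G₂.V, ∃ x : G₁.V, bisim d c L G₁ G₂ x v := by
      intro v
      by_contra hno
      push_neg at hno
      apply h3
      show 1 ≤ Set.ncard {u : G₂.V |
        GMLSat G₂ (GML.not (bigOr ((vertList G₁).map (chi d c G₁ L)))) u}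
      apply (ncard_le_iff _ 1).mpr
      refine ⟨fun _ => v, Function.injective_of_subsingleton _, fun _ => ?_⟩
      intro hsat
      rw [sat_bigOr] at hsat
      obtain ⟨φ, hφ, hsatφ⟩ := hsat
      obtain ⟨x, _, rfl⟩ := List.mem_map.mp hφ
      exact hno x ((chi_spec d c hc G₁ L x G₂ v).mp hsatφ)
    refine ⟨hb, hcnt, ?_⟩
    intro u
    obtain ⟨x, hx⟩ := hcov u
    have e1 : {u₁ : G₁.V | bisim d c L G₁ G₂ u₁ u} = {u₁ : G₁.V | bisim d c L G₁ G₁ u₁ x} := by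
      ext z
      constructor
      · intro hz
        exact bisim_trans d c L G₁ G₂ G₁ _ _ _ hz (bisim_symm d c L _ _ _ _ hx)
      · intro hz
        exact bisim_trans d c L G₁ G₁ G₂ _ _ _ hz hx
    have e2 : {u₂ : G₂.V | bisim d c L G₂ G₂ u₂ u} = {u₂ : G₂.V | bisim d c L G₂ G₁ u₂ x} := by
      ext z
      constructor
      · intro hz
        exact bisim_trans d c L G₂ G₂ G₁ _ _ _ hz (bisim_symm d c L _ _ _ _ hx)
      · intro hz
        exact bisim_trans d c L G₂ G₁ G₂ _ _ _ hz hx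
    rw [e1, e2]
    have e3 : {u₁ : G₁.V | bisim d c L G₁ G₁ u₁ x}.ncard = N₁ x := rfl
    have e4 : {u₂ : G₂.V | bisim d c L G₂ G₁ u₂ x}.ncard = N₂ x := rfl
    rw [e3, e4]
    exact hcnt x
  · rintro ⟨hb, hcnt, hcnt₂⟩
    have hcnt' : ∀ u : G₁.V, min (N₁ u) q = min (N₂ u) q := hcnt
    refine ⟨(chi_spec d c hc G₁ L v₁ G₂ v₂).mpr hb, ?_, ?_⟩
    · rw [sat_bigAnd]
      intro φ hφ
      obtain ⟨u, _, rfl⟩ := List.mem_map.mp hφ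
      have hmq := hcnt' u
      constructor
      · show min (N₁ u) q ≤ Set.ncard {v : G₂.V | GMLSat G₂ (chi d c G₁ L u) v}
        rw [hsetchi u]
        show min (N₁ u) q ≤ N₂ u
        omega
      · by_cases hlt : N₁ u < q
        · rw [if_pos hlt]
          show ¬ (N₁ u + 1 ≤ Set.ncard {v : G₂.V | GMLSat G₂ (chi d c G₁ L u) v})
          rw [hsetchi u]
          show ¬ (N₁ u + 1 ≤ N₂ u)
          omega
        · rw [if_neg hlt]
          trivial
    · intro hsat
      have h1 : 1 ≤ Set.ncard {u : G₂.V |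
          GMLSat G₂ (GML.not (bigOr ((vertList G₁).map (chi d c G₁ L)))) u} := hsat
      obtain ⟨u, _, hmem⟩ := (ncard_le_iff _ 1).mp h1
      have hno : ∀ x : G₁.V, ¬ bisim d c L G₁ G₂ x (u 0) := by
        intro x hx
        apply hmem 0
        rw [sat_bigOr]
        exact ⟨chi d c G₁ L x, List.mem_map.mpr ⟨x, mem_vertList G₁ x, rfl⟩,
          (chi_spec d c hc G₁ L x G₂ (u 0)).mpr hx⟩
      have hmin := hcnt₂ (u 0)
      have hz : {u₁ : G₁.V | bisim d c L G₁ G₂ u₁ (u 0)} = ∅ := by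
        ext z
        simp only [Set.mem_setOf_eq, Set.mem_empty_iff_false, iff_false]
        exact hno z
      rw [hz, Set.ncard_empty] at hmin
      have hpos : 1 ≤ Set.ncard {u₂ : G₂.V | bisim d c L G₂ G₂ u₂ (u 0)} := by
        apply (ncard_le_iff _ 1).mpr
        exact ⟨fun _ => u 0, Function.injective_of_subsingleton _,
          fun _ => bisim_refl d c L G₂ (u 0)⟩
      omega

end Main

/-- Every pointed `d`-featured graph has a `GML^∃`
characteristic formula for `∼^{L,c,q}_∃`: a formula satisfied by exactly the
pointed graphs `∼^{L,c,q}_∃`-bisimilar to it. -/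
theorem stmt13 (d c L q : ℕ) (hc : 1 ≤ c) (hq : 1 ≤ q)
    (G₁ : FGraph d) (v₁ : G₁.V) :
    ∃ γ : GML d, ∀ (G₂ : FGraph d) (v₂ : G₂.V),
      GMLSat G₂ γ v₂ ↔ bisimQ d c L q G₁ G₂ v₁ v₂ := by
  exact stmt13' d c L q hc hq G₁ v₁
end

section
/- For every d-dimensional GML^∃ formula φ there exist c ∈ ℕ and an ACR-GNN N with input dimension d and c-bounded aggregation functions such that for every pointed d-featured graph (G, v): N(G, v) = 1 if and only if G, v ⊨ φ. -/
/-- The `c`-restriction of a multiset: every multiplicity is capped at `c`. -/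
noncomputable def mcap {α : Type*} (c : ℕ) (M : Multiset α) : Multiset α :=
  letI := Classical.decEq α
  M.toFinset.val.bind fun x => Multiset.replicate (min (M.count x) c) x

/-- A function on finite multisets is `c`-bounded if it only depends on the
`c`-restriction of its argument. -/
def CBounded {α β : Type*} (c : ℕ) (F : Multiset α → β) : Prop :=
  ∀ M : Multiset α, F M = F (mcap c M)

/-- An `L`-layer aggregate-combine-readout GNN with input dimension `d`. -/
structure ACRGNN (d L : ℕ) where
  dims : ℕ → ℕ
  dims_zero : dims 0 = d
  agg : (i : ℕ) → Multiset (Fin (dims i) → ℝ) → (Fin (dims i) → ℝ)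
  read : (i : ℕ) → Multiset (Fin (dims i) → ℝ) → (Fin (dims i) → ℝ)
  comb : (i : ℕ) → (Fin (dims i) → ℝ) → (Fin (dims i) → ℝ) → (Fin (dims i) → ℝ) →
    (Fin (dims (i + 1)) → ℝ)
  cls : (Fin (dims L) → ℝ) → Bool

open Classical in
/-- The feature embeddings computed layer by layer by an ACR-GNN on a `d`-featured graph. -/
noncomputable def ACRGNN.emb {d L : ℕ} (N : ACRGNN d L) (G : FGraph d) :
    (i : ℕ) → G.V → (Fin (N.dims i) → ℝ)
  | 0 => fun v j => if G.f v (Fin.cast N.dims_zero j) then 1 else 0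
  | i + 1 => fun v =>
      N.comb i (N.emb G i v)
        (N.agg i ((Finset.univ.filter (fun u => G.E v u)).val.map (N.emb G i)))
        (N.read i (Finset.univ.val.map (N.emb G i)))

/-- Acceptance of a pointed featured graph by an ACR-GNN. -/
noncomputable def ACRGNN.accepts {d L : ℕ} (N : ACRGNN d L) (G : FGraph d) (v : G.V) : Bool :=
  N.cls (N.emb G L v)

/-- Dimension-wise multiset sum. -/
def sumAgg (n : ℕ) : Multiset (Fin n → ℝ) → (Fin n → ℝ) :=
  fun M j => (M.map fun x => x j).sum

/-- A simple ACR-GNN: sum aggregation and readout, combination functions of the form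
`ReLU(x₁A + x₂C + x₃R + b)`, and a linear threshold classifier on `ℝ`. -/
def ACRGNN.IsSimple {d L : ℕ} (N : ACRGNN d L) : Prop :=
  (∀ i, N.agg i = sumAgg (N.dims i)) ∧
  (∀ i, N.read i = sumAgg (N.dims i)) ∧
  (∀ i, ∃ (A C R : Matrix (Fin (N.dims i)) (Fin (N.dims (i + 1))) ℝ)
      (b : Fin (N.dims (i + 1)) → ℝ),
      ∀ x₁ x₂ x₃ j, N.comb i x₁ x₂ x₃ j =
        max 0 (Matrix.vecMul x₁ A j + Matrix.vecMul x₂ C j + Matrix.vecMul x₃ R j + b j)) ∧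
  N.dims L = 1 ∧
  ∃ (a : Fin (N.dims L) → ℝ) (t : ℝ), ∀ x, N.cls x = decide (0 ≤ ∑ j, a j * x j + t)
section McapLemmas
variable {α : Type*}

lemma count_mcap (c : ℕ) (M : Multiset α) (x : α) :
    letI := Classical.decEq α
    (mcap c M).count x = min (M.count x) c := by
  classical
  show Multiset.count x _ = _
  rw [mcap]
  rw [Multiset.count_bind]
  by_cases hx : x ∈ M.toFinset
  · rw [show (Multiset.map (fun b => Multiset.count x (Multiset.replicate (min (M.count b) c) b)) M.toFinset.val).sum
        = ∑ b ∈ M.toFinset, Multiset.count x (Multiset.replicate (min (M.count b) c) b) from rfl]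
    rw [Finset.sum_eq_single x]
    · simp
    · intro b _ hbx
      simp [Multiset.count_replicate, hbx]
    · intro h; exact absurd hx h
  · have hx0 : M.count x = 0 := by
      simpa [Multiset.mem_toFinset, Multiset.count_eq_zero] using hx
    rw [hx0]
    simp only [Nat.zero_min]
    rw [show (Multiset.map (fun b => Multiset.count x (Multiset.replicate (min (M.count b) c) b)) M.toFinset.val).sum
        = ∑ b ∈ M.toFinset, Multiset.count x (Multiset.replicate (min (M.count b) c) b) from rfl]
    apply Finset.sum_eq_zero
    intro b hb
    have hbx : b ≠ x := by rintro rfl; exact hx hb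
    simp [Multiset.count_replicate, hbx]

lemma mcap_idem (c : ℕ) (M : Multiset α) : mcap c (mcap c M) = mcap c M := by
  classical
  ext x
  rw [count_mcap, count_mcap]
  omega

lemma mcap_le (c : ℕ) (M : Multiset α) : mcap c M ≤ M := by
  classical
  rw [Multiset.le_iff_count]
  intro a
  rw [count_mcap]
  omega

lemma filter_mcap (c : ℕ) (M : Multiset α) (p : α → Prop) [DecidablePred p] :
    (mcap c M).filter p = mcap c (M.filter p) := by
  classical
  ext x
  by_cases hp : p x
  · rw [Multiset.count_filter_of_pos hp, count_mcap, count_mcap,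
      Multiset.count_filter_of_pos hp]
  · rw [Multiset.count_filter_of_neg hp, count_mcap, Multiset.count_filter_of_neg hp]
    omega

lemma min_card_mcap (c : ℕ) (M : Multiset α) :
    min (Multiset.card (mcap c M)) c = min (Multiset.card M) c := by
  classical
  have h1 : Multiset.card (mcap c M) ≤ Multiset.card M :=
    Multiset.card_le_card (mcap_le c M)
  by_cases h : ∃ x, c ≤ M.count x
  · obtain ⟨x, hx⟩ := h
    have : c ≤ Multiset.card (mcap c M) := by
      have := Multiset.count_le_card x (mcap c M)
      rw [count_mcap] at this
      omega
    omega
  · push_neg at h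
    have : mcap c M = M := by
      ext x
      rw [count_mcap]
      have := h x
      omega
    rw [this]

lemma min_countP_mcap (c : ℕ) (M : Multiset α) (p : α → Prop) [DecidablePred p] :
    min (Multiset.countP p (mcap c M)) c = min (Multiset.countP p M) c := by
  rw [Multiset.countP_eq_card_filter, Multiset.countP_eq_card_filter,
    filter_mcap, min_card_mcap]

end McapLemmas

deriving instance DecidableEq for GML

namespace Stmt16

variable {d : ℕ}

/-- Pre-depth: number of layers (minus one) needed to evaluate a formula. -/
def pdep : GML d → ℕ
  | .top => 0
  | .prop _ => 0
  | .not ψ => pdep ψ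
  | .and ψ χ => max (pdep ψ) (pdep χ)
  | .dia _ ψ => pdep ψ + 1
  | .ex _ ψ => pdep ψ + 1

/-- Max constant occurring in a `dia` modality. -/
def maxC : GML d → ℕ
  | .top => 0
  | .prop _ => 0
  | .not ψ => maxC ψ
  | .and ψ χ => max (maxC ψ) (maxC χ)
  | .dia k ψ => max k (maxC ψ)
  | .ex _ ψ => maxC ψ

/-- List of subformulas. -/
def subf : GML d → List (GML d)
  | .top => [.top]
  | .prop p => [.prop p]
  | .not ψ => .not ψ :: subf ψ
  | .and ψ χ => .and ψ χ :: (subf ψ ++ subf χ)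
  | .dia k ψ => .dia k ψ :: subf ψ
  | .ex k ψ => .ex k ψ :: subf ψ

lemma self_mem_subf (ψ : GML d) : ψ ∈ subf ψ := by
  cases ψ <;> simp [subf]

lemma subf_trans : ∀ (φ ψ χ : GML d), ψ ∈ subf φ → χ ∈ subf ψ → χ ∈ subf φ := by
  intro φ
  induction φ with
  | top => intro ψ χ h1 h2; simp [subf] at h1; subst h1; exact h2
  | prop p => intro ψ χ h1 h2; simp [subf] at h1; subst h1; exact h2
  | not ψ' ih =>
      intro ψ χ h1 h2
      rcases List.mem_cons.1 h1 with h | h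
      · subst h; exact h2
      · exact List.mem_cons_of_mem _ (ih ψ χ h h2)
  | and ψ' χ' ih1 ih2 =>
      intro ψ χ h1 h2
      rcases List.mem_cons.1 h1 with h | h
      · subst h; exact h2
      · rcases List.mem_append.1 h with h | h
        · exact List.mem_cons_of_mem _ (List.mem_append.2 (Or.inl (ih1 ψ χ h h2)))
        · exact List.mem_cons_of_mem _ (List.mem_append.2 (Or.inr (ih2 ψ χ h h2)))
  | dia k ψ' ih =>
      intro ψ χ h1 h2
      rcases List.mem_cons.1 h1 with h | h
      · subst h; exact h2
      · exact List.mem_cons_of_mem _ (ih ψ χ h h2)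
  | ex k ψ' ih =>
      intro ψ χ h1 h2
      rcases List.mem_cons.1 h1 with h | h
      · subst h; exact h2
      · exact List.mem_cons_of_mem _ (ih ψ χ h h2)

lemma maxC_le_of_mem_subf : ∀ (φ ψ : GML d), ψ ∈ subf φ → maxC ψ ≤ maxC φ := by
  intro φ
  induction φ with
  | top => intro ψ h; simp [subf] at h; subst h; rfl
  | prop p => intro ψ h; simp [subf] at h; subst h; rfl
  | not ψ' ih =>
      intro ψ h
      rcases List.mem_cons.1 h with h | h
      · subst h; rfl
      · exact ih ψ h
  | and ψ' χ' ih1 ih2 =>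
      intro ψ h
      rcases List.mem_cons.1 h with h | h
      · subst h; rfl
      · rcases List.mem_append.1 h with h | h
        · exact le_trans (ih1 ψ h) (le_max_left _ _)
        · exact le_trans (ih2 ψ h) (le_max_right _ _)
  | dia k ψ' ih =>
      intro ψ h
      rcases List.mem_cons.1 h with h | h
      · subst h; rfl
      · exact le_trans (ih ψ h) (le_max_right _ _)
  | ex k ψ' ih =>
      intro ψ h
      rcases List.mem_cons.1 h with h | h
      · subst h; rfl
      · exact ih ψ h

open Classical in
/-- One evaluation step on the graph, given previous-layer values. -/
noncomputable def satB (c : ℕ) (G : FGraph d) (prev : GML d → G.V → Bool) :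
    GML d → G.V → Bool
  | .top, _ => true
  | .prop p, v => G.f v p
  | .not ψ, v => !(satB c G prev ψ v)
  | .and ψ χ, v => satB c G prev ψ v && satB c G prev χ v
  | .dia k ψ, v =>
      decide (k ≤ min c (Finset.univ.filter (fun u => G.E v u ∧ prev ψ u = true)).card)
  | .ex k ψ, _ =>
      decide (k ≤ (Finset.univ.filter (fun u => prev ψ u = true)).card)

/-- Layered approximate semantics. -/
noncomputable def satA (c : ℕ) (G : FGraph d) : ℕ → GML d → G.V → Bool
  | 0 => fun _ _ => false
  | i + 1 => satB c G (satA c G i)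

open Classical in
lemma satA_correct (c : ℕ) (G : FGraph d) :
    ∀ (ψ : GML d), maxC ψ ≤ c → ∀ i, pdep ψ + 1 ≤ i → ∀ v,
      (satA c G i ψ v = true ↔ GMLSat G ψ v) := by
  intro ψ
  induction ψ with
  | top =>
      intro _ i hi v
      obtain ⟨j, rfl⟩ : ∃ j, i = j + 1 := ⟨i - 1, by omega⟩
      simp [satA, satB, GMLSat]
  | prop p =>
      intro _ i hi v
      obtain ⟨j, rfl⟩ : ∃ j, i = j + 1 := ⟨i - 1, by omega⟩
      simp [satA, satB, GMLSat]
  | not ψ ih =>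
      intro hc i hi v
      obtain ⟨j, rfl⟩ : ∃ j, i = j + 1 := ⟨i - 1, by omega⟩
      have := ih (by simpa [maxC] using hc) (j + 1) (by simpa [pdep] using hi) v
      simp only [satA, satB, GMLSat, Bool.not_eq_true'] at *
      rw [← this]
      simp
  | and ψ χ ih1 ih2 =>
      intro hc i hi v
      obtain ⟨j, rfl⟩ : ∃ j, i = j + 1 := ⟨i - 1, by omega⟩
      simp only [maxC, max_le_iff] at hc
      simp only [pdep] at hi
      have h1 := ih1 hc.1 (j + 1) (by omega) v
      have h2 := ih2 hc.2 (j + 1) (by omega) v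
      simp only [satA, satB, GMLSat, Bool.and_eq_true] at *
      rw [← h1, ← h2]
  | dia k ψ ih =>
      intro hc i hi v
      obtain ⟨j, rfl⟩ : ∃ j, i = j + 1 := ⟨i - 1, by omega⟩
      simp only [maxC, max_le_iff] at hc
      simp only [pdep] at hi
      have hIH : ∀ u, (satA c G j ψ u = true ↔ GMLSat G ψ u) :=
        fun u => ih hc.2 j (by omega) u
      show decide (k ≤ min c (Finset.univ.filter
          (fun u => G.E v u ∧ satA c G j ψ u = true)).card) = true ↔ _
      rw [decide_eq_true_iff]
      have hset : {u : G.V | G.E v u ∧ GMLSat G ψ u}.ncard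
          = (Finset.univ.filter (fun u => G.E v u ∧ satA c G j ψ u = true)).card := by
        rw [Set.ncard_eq_toFinset_card']
        congr 1
        ext u
        simp [hIH u]
      show _ ↔ k ≤ Set.ncard {u : G.V | G.E v u ∧ GMLSat G ψ u}
      rw [hset]
      have hkc : k ≤ c := hc.1
      omega
  | ex k ψ ih =>
      intro hc i hi v
      obtain ⟨j, rfl⟩ : ∃ j, i = j + 1 := ⟨i - 1, by omega⟩
      simp only [maxC] at hc
      simp only [pdep] at hi
      have hIH : ∀ u, (satA c G j ψ u = true ↔ GMLSat G ψ u) :=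
        fun u => ih hc j (by omega) u
      show decide (k ≤ (Finset.univ.filter (fun u => satA c G j ψ u = true)).card)
          = true ↔ _
      rw [decide_eq_true_iff]
      have hset : {u : G.V | GMLSat G ψ u}.ncard
          = (Finset.univ.filter (fun u => satA c G j ψ u = true)).card := by
        rw [Set.ncard_eq_toFinset_card']
        congr 1
        ext u
        simp [hIH u]
      show _ ↔ k ≤ Set.ncard {u : G.V | GMLSat G ψ u}
      rw [hset]

end Stmt16

namespace Stmt16

/-- Encode a (features, subformula-truths) state as a real number. -/
noncomputable def enc (d n : ℕ) : ((Fin d → Bool) × (Fin n → Bool)) → ℝ :=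
  fun x => ((Fintype.equivFin _ x : ℕ) : ℝ)

lemma enc_inj (d n : ℕ) : Function.Injective (enc d n) := fun a b h =>
  (Fintype.equivFin _).injective (Fin.val_injective (Nat.cast_injective h))

/-- Decode a state. -/
noncomputable def dec (d n : ℕ) : ℝ → ((Fin d → Bool) × (Fin n → Bool)) :=
  Function.invFun (enc d n)

lemma dec_enc (d n : ℕ) (x : (Fin d → Bool) × (Fin n → Bool)) :
    dec d n (enc d n x) = x :=
  Function.leftInverse_invFun (enc_inj d n) x

/-- Encode a tuple of naturals as a real number. -/
noncomputable def encN (n : ℕ) : (Fin n → ℕ) → ℝ :=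
  fun x => (Encodable.encode x : ℝ)

lemma encN_inj (n : ℕ) : Function.Injective (encN n) := fun a b h =>
  Encodable.encode_injective (Nat.cast_injective h)

/-- Decode a tuple of naturals, as a total function on `ℕ`. -/
noncomputable def decN (n : ℕ) (r : ℝ) : ℕ → ℕ :=
  fun m => if h : m < n then Function.invFun (encN n) r ⟨m, h⟩ else 0

lemma decN_encN (n : ℕ) (x : Fin n → ℕ) (m : ℕ) (h : m < n) :
    decN n (encN n x) m = x ⟨m, h⟩ := by
  rw [decN, dif_pos h, Function.leftInverse_invFun (encN_inj n) x]

variable {d : ℕ}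

/-- Decode a feature vector from reals. -/
noncomputable def decF (d : ℕ) (x : Fin d → ℝ) : Fin d → Bool := fun p => decide (x p = 1)

/-- Evaluation of a formula from own features and (capped) neighbour /
global counts of subformulas. -/
noncomputable def evalStep (s : List (GML d)) (fv : Fin d → Bool) (ac rc : ℕ → ℕ) :
    GML d → Bool
  | .top => true
  | .prop p => fv p
  | .not ψ => !(evalStep s fv ac rc ψ)
  | .and ψ χ => evalStep s fv ac rc ψ && evalStep s fv ac rc χ
  | .dia k ψ => decide (k ≤ ac (s.idxOf ψ))
  | .ex k ψ => decide (k ≤ rc (s.idxOf ψ))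

open Classical in
lemma evalStep_eq (φ : GML d) (c : ℕ) (G : FGraph d) (prev : GML d → G.V → Bool)
    (v : G.V) (ac rc : ℕ → ℕ)
    (hac : ∀ ψ, ψ ∈ subf φ → ac ((subf φ).idxOf ψ)
      = min c (Finset.univ.filter (fun u => G.E v u ∧ prev ψ u = true)).card)
    (hrc : ∀ ψ, ψ ∈ subf φ → rc ((subf φ).idxOf ψ)
      = (Finset.univ.filter (fun u => prev ψ u = true)).card) :
    ∀ χ, χ ∈ subf φ → evalStep (subf φ) (G.f v) ac rc χ = satB c G prev χ v := by
  intro χ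
  induction χ with
  | top => intro _; rfl
  | prop p => intro _; rfl
  | not ψ ih =>
      intro h
      have hψ : ψ ∈ subf φ :=
        subf_trans φ _ ψ h (List.mem_cons_of_mem _ (self_mem_subf ψ))
      simp only [evalStep, satB]
      rw [ih hψ]
  | and ψ χ' ih1 ih2 =>
      intro h
      have hψ : ψ ∈ subf φ := subf_trans φ _ ψ h
        (List.mem_cons_of_mem _ (List.mem_append.2 (Or.inl (self_mem_subf ψ))))
      have hχ : χ' ∈ subf φ := subf_trans φ _ χ' h
        (List.mem_cons_of_mem _ (List.mem_append.2 (Or.inr (self_mem_subf χ'))))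
      simp only [evalStep, satB]
      rw [ih1 hψ, ih2 hχ]
  | dia k ψ _ =>
      intro h
      have hψ : ψ ∈ subf φ :=
        subf_trans φ _ ψ h (List.mem_cons_of_mem _ (self_mem_subf ψ))
      show decide (k ≤ ac ((subf φ).idxOf ψ)) = _
      rw [hac ψ hψ]
      rfl
  | ex k ψ _ =>
      intro h
      have hψ : ψ ∈ subf φ :=
        subf_trans φ _ ψ h (List.mem_cons_of_mem _ (self_mem_subf ψ))
      show decide (k ≤ rc ((subf φ).idxOf ψ)) = _
      rw [hrc ψ hψ]
      rfl

open Classical in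
/-- The network capturing `φ`. -/
noncomputable def net (d : ℕ) (φ : GML d) : ACRGNN d (pdep φ + 1) where
  dims := fun i => match i with | 0 => d | _ + 1 => 1
  dims_zero := rfl
  agg := fun i => match i with
    | 0 => fun _ _ => 0
    | _ + 1 => fun M _ =>
        encN (subf φ).length (fun j =>
          min (maxC φ) (Multiset.countP
            (fun x => (dec d (subf φ).length (x 0)).2 j = true) (mcap (maxC φ) M)))
  read := fun i => match i with
    | 0 => fun _ _ => 0
    | _ + 1 => fun M _ =>
        encN (subf φ).length (fun j =>
          Multiset.countP (fun x => (dec d (subf φ).length (x 0)).2 j = true) M)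
  comb := fun i => match i with
    | 0 => fun x _ _ _ =>
        enc d (subf φ).length
          ⟨decF d x,
           fun j => evalStep (subf φ) (decF d x)
             (fun _ => 0) (fun _ => 0) ((subf φ).get j)⟩
    | _ + 1 => fun x a r _ =>
        enc d (subf φ).length
          ⟨(dec d (subf φ).length (x 0)).1,
           fun j => evalStep (subf φ) (dec d (subf φ).length (x 0)).1
             (decN (subf φ).length (a 0)) (decN (subf φ).length (r 0))
             ((subf φ).get j)⟩
  cls := fun x => (dec d (subf φ).length (x 0)).2
      ⟨(subf φ).idxOf φ, List.idxOf_lt_length_iff.2 (self_mem_subf φ)⟩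

end Stmt16

namespace Stmt16

variable {d : ℕ}

open Classical in
lemma net_comb_zero (φ : GML d) (x a r : Fin d → ℝ) :
    (net d φ).comb 0 x a r = fun _ =>
      enc d (subf φ).length
        ⟨decF d x,
         fun j => evalStep (subf φ) (decF d x)
           (fun _ => 0) (fun _ => 0) ((subf φ).get j)⟩ := rfl

open Classical in
lemma net_comb_succ (φ : GML d) (i : ℕ) (x a r : Fin 1 → ℝ) :
    (net d φ).comb (i + 1) x a r = fun _ =>
      enc d (subf φ).length
        ⟨(dec d (subf φ).length (x 0)).1,
         fun j => evalStep (subf φ) (dec d (subf φ).length (x 0)).1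
           (decN (subf φ).length (a 0)) (decN (subf φ).length (r 0))
           ((subf φ).get j)⟩ := rfl

open Classical in
lemma net_agg_succ (φ : GML d) (i : ℕ) (M : Multiset (Fin 1 → ℝ)) :
    (net d φ).agg (i + 1) M = fun _ =>
      encN (subf φ).length (fun j =>
        min (maxC φ) (Multiset.countP
          (fun x => (dec d (subf φ).length (x 0)).2 j = true) (mcap (maxC φ) M))) := rfl

open Classical in
lemma net_read_succ (φ : GML d) (i : ℕ) (M : Multiset (Fin 1 → ℝ)) :
    (net d φ).read (i + 1) M = fun _ =>
      encN (subf φ).length (fun j =>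
        Multiset.countP (fun x => (dec d (subf φ).length (x 0)).2 j = true) M) := rfl

open Classical in
lemma card_filter_filter {V : Type} [Fintype V] (P Q : V → Prop) :
    Multiset.card (Multiset.filter Q (Finset.univ.filter P).val)
      = (Finset.univ.filter (fun u => P u ∧ Q u)).card := by
  classical
  have h1 : Multiset.card (Multiset.filter Q (Finset.univ.filter P).val)
      = ((Finset.univ.filter P).filter Q).card := rfl
  rw [h1, Finset.filter_filter]

open Classical in
lemma card_filter_univ {V : Type} [Fintype V] (Q : V → Prop) :
    Multiset.card (Multiset.filter Q (Finset.univ : Finset V).val)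
      = (Finset.univ.filter Q).card := rfl

open Classical in
lemma emb_net (φ : GML d) (G : FGraph d) :
    ∀ i (v : G.V), (net d φ).emb G (i + 1) v
      = fun _ => enc d (subf φ).length
          ⟨G.f v, fun j => satA (maxC φ) G (i + 1) ((subf φ).get j) v⟩ := by
  have hemb0 : ∀ (u : G.V) (p : Fin d),
      (net d φ).emb G 0 u p = if G.f u p then 1 else 0 := fun u p => rfl
  have hfv : ∀ (u : G.V), decF d ((net d φ).emb G 0 u) = G.f u := by
    intro u
    funext p
    simp only [decF]
    rw [hemb0]
    cases h : G.f u p <;> simp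
  intro i
  induction i with
  | zero =>
      intro v
      have h1 : (net d φ).emb G 1 v
          = (net d φ).comb 0 ((net d φ).emb G 0 v)
              ((net d φ).agg 0 (Multiset.map ((net d φ).emb G 0)
                (Finset.univ.filter (fun u => G.E v u)).val))
              ((net d φ).read 0 (Multiset.map ((net d φ).emb G 0) Finset.univ.val)) := rfl
      rw [h1]
      erw [net_comb_zero]
      rw [hfv v]
      funext z
      refine congrArg _ (congrArg (Prod.mk _) ?_)
      funext j
      show _ = satB (maxC φ) G (satA (maxC φ) G 0) ((subf φ).get j) v
      apply evalStep_eq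
      · intro ψ _
        have : (fun u => G.E v u ∧ satA (maxC φ) G 0 ψ u = true) = fun _ => False := by
          funext u; simp [satA]
        simp [this]
      · intro ψ _
        have : (fun u => satA (maxC φ) G 0 ψ u = true) = fun _ => False := by
          funext u; simp [satA]
        simp [this]
      · exact List.get_mem _ _
  | succ i ih =>
      intro v
      have ih' : (net d φ).emb G (i + 1) = fun u => (fun _ =>
          enc d (subf φ).length
            ⟨G.f u, fun j => satA (maxC φ) G (i + 1) ((subf φ).get j) u⟩ :
              Fin ((net d φ).dims (i+1)) → ℝ) := funext fun u => ih u
      have h1 : (net d φ).emb G (i + 1 + 1) v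
          = (net d φ).comb (i + 1) ((net d φ).emb G (i + 1) v)
              ((net d φ).agg (i + 1) (Multiset.map ((net d φ).emb G (i + 1))
                (Finset.univ.filter (fun u => G.E v u)).val))
              ((net d φ).read (i + 1) (Multiset.map ((net d φ).emb G (i + 1)) Finset.univ.val)) := rfl
      rw [h1, ih']
      erw [net_comb_succ, net_agg_succ, net_read_succ]
      simp only [dec_enc]
      funext z
      refine congrArg _ (congrArg (Prod.mk _) ?_)
      funext j
      show _ = satB (maxC φ) G (satA (maxC φ) G (i + 1)) ((subf φ).get j) v
      apply evalStep_eq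
      · intro ψ hψ
        have hlt : (subf φ).idxOf ψ < (subf φ).length := List.idxOf_lt_length_iff.2 hψ
        rw [decN_encN _ _ _ hlt]
        erw [min_comm (maxC φ), min_countP_mcap, min_comm _ (maxC φ)]
        erw [Multiset.countP_map]
        simp only [dec_enc, List.idxOf_get hlt]
        congr 1
        convert card_filter_filter (fun u => G.E v u)
          (fun u => satA (maxC φ) G (i + 1) ψ u = true) using 2 <;> congr!
      · intro ψ hψ
        have hlt : (subf φ).idxOf ψ < (subf φ).length := List.idxOf_lt_length_iff.2 hψ
        rw [decN_encN _ _ _ hlt]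
        erw [Multiset.countP_map]
        simp only [dec_enc, List.idxOf_get hlt]
        convert card_filter_univ (fun u => satA (maxC φ) G (i + 1) ψ u = true) using 2 <;> congr!
      · exact List.get_mem _ _

end Stmt16

open Stmt16 in
/-- Every `d`-dimensional `GML^∃` formula is captured by some
ACR-GNN with input dimension `d` and `c`-bounded aggregation functions. -/
theorem stmt16 (d : ℕ) (φ : GML d) :
    ∃ (c L : ℕ) (N : ACRGNN d L), (∀ i, CBounded c (N.agg i)) ∧
      ∀ (G : FGraph d) (v : G.V), N.accepts G v = true ↔ GMLSat G φ v := by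
  classical
  refine ⟨maxC φ, pdep φ + 1, net d φ, ?_, ?_⟩
  · intro i
    cases i with
    | zero => intro M; rfl
    | succ i =>
        intro M
        erw [net_agg_succ, net_agg_succ, mcap_idem]
  · intro G v
    have h := emb_net φ G (pdep φ) v
    show (net d φ).cls ((net d φ).emb G (pdep φ + 1) v) = true ↔ _
    rw [h]
    show (dec d (subf φ).length (enc d (subf φ).length
        ⟨G.f v, fun j => satA (maxC φ) G (pdep φ + 1) ((subf φ).get j) v⟩)).2
        ⟨(subf φ).idxOf φ, List.idxOf_lt_length_iff.2 (self_mem_subf φ)⟩ = true ↔ _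
    rw [dec_enc]
    have hget : (subf φ).get ⟨(subf φ).idxOf φ,
        List.idxOf_lt_length_iff.2 (self_mem_subf φ)⟩ = φ :=
      List.idxOf_get _
    show satA (maxC φ) G (pdep φ + 1) ((subf φ).get ⟨(subf φ).idxOf φ,
        List.idxOf_lt_length_iff.2 (self_mem_subf φ)⟩) v = true ↔ _
    rw [hget]
    exact satA_correct (maxC φ) G φ le_rfl (pdep φ + 1) le_rfl v
end

section
/- For all L ≥ 0 and c ≥ 0 there exist a 2-featured undirected graph G = (V, E, f) that is the gadgetisation of a strict linear order and a 2-featured undirected graph H = (V, F, f) over the same vertices and features that is the gadgetisation of a directed graph which is not a strict linear order, such that G, v ≡^{L,c} H, v for every v ∈ V. -/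
/-- A binary relation is a strict linear order if it is irreflexive, transitive
and total. -/
def IsSLO {V : Type} (E : V → V → Prop) : Prop :=
  (∀ v, ¬ E v v) ∧ (∀ u v w, E u v → E v w → E u w) ∧
  (∀ u v : V, u ≠ v → E u v ∨ E v u)
/-- A `2`-featured undirected graph: finite nonempty vertex set, symmetric edge
relation and feature map into `{0,1}²`. -/
structure UFG where
  V : Type
  [fintypeV : Fintype V]
  nonemptyV : Nonempty V
  E : V → V → Prop
  symm : ∀ x y, E x y → E y x
  f : V → Fin 2 → Bool

attribute [instance] UFG.fintypeV

/-- A directed graph (finite nonempty vertex set, edge relation). -/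
structure DGraph where
  V : Type
  [fintypeV : Fintype V]
  nonemptyV : Nonempty V
  E : V → V → Prop

attribute [instance] DGraph.fintypeV

/-- Vertices of the gadgetisation: three disjoint copies of `V`
(sources `gs v`, sinks `gt v`, identifiers `gi v`). -/
abbrev Gad (V : Type) : Type := V ⊕ V ⊕ V

def gs {V : Type} (v : V) : Gad V := Sum.inl v
def gt {V : Type} (v : V) : Gad V := Sum.inr (Sum.inl v)
def gi {V : Type} (v : V) : Gad V := Sum.inr (Sum.inr v)

/-- One orientation of the gadgetisation edges. -/
inductive gadE0 {V : Type} (E : V → V → Prop) : Gad V → Gad V → Prop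
  | st {v u : V} : E v u → gadE0 E (gs v) (gt u)
  | si (v : V) : gadE0 E (gs v) (gi v)
  | it (v : V) : gadE0 E (gi v) (gt v)

/-- Edges of the gadgetisation (symmetric closure). -/
def gadE {V : Type} (E : V → V → Prop) (x y : Gad V) : Prop :=
  gadE0 E x y ∨ gadE0 E y x

/-- Features of the gadgetisation: `(1,0)` on sources, `(0,1)` on sinks,
`(0,0)` on identifiers. -/
def gadf {V : Type} : Gad V → Fin 2 → Bool :=
  Sum.elim (fun _ => ![true, false])
    (Sum.elim (fun _ => ![false, true]) (fun _ => ![false, false]))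

/-- The gadgetisation of a directed graph as a `2`-featured undirected graph. -/
def gadget (D : DGraph) : UFG where
  V := Gad D.V
  nonemptyV := ⟨gs (Classical.choice D.nonemptyV)⟩
  E := gadE D.E
  symm := fun _ _ h => h.symm
  f := gadf

/-- `≡^{L,c}` : the `L`-turn `2`-pebble `c`-counting back-and-forth equivalence on
pointed `2`-featured undirected graphs. -/
def uequiv (c : ℕ) : (L : ℕ) → (G₁ G₂ : UFG) → G₁.V → G₂.V → Prop
  | 0, G₁, G₂, v₁, v₂ => G₁.f v₁ = G₂.f v₂
  | L + 1, G₁, G₂, v₁, v₂ =>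
      G₁.f v₁ = G₂.f v₂ ∧
      (∀ k, k ≤ c → ∀ u₁ : Fin k → G₁.V, Function.Injective u₁ →
        ∃ u₂ : Fin k → G₂.V, Function.Injective u₂ ∧
          ∀ i, (G₁.E v₁ (u₁ i) ↔ G₂.E v₂ (u₂ i)) ∧ uequiv c L G₁ G₂ (u₁ i) (u₂ i)) ∧
      (∀ k, k ≤ c → ∀ u₂ : Fin k → G₂.V, Function.Injective u₂ →
        ∃ u₁ : Fin k → G₁.V, Function.Injective u₁ ∧
          ∀ i, (G₁.E v₁ (u₁ i) ↔ G₂.E v₂ (u₂ i)) ∧ uequiv c L G₁ G₂ (u₁ i) (u₂ i))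
namespace S19

/-- letter of a gadget vertex: 0 = source, 1 = sink, 2 = identifier -/
def letterOf {V : Type} : Gad V → Fin 3
  | .inl _ => 0
  | .inr (.inl _) => 1
  | .inr (.inr _) => 2

def idxOf {V : Type} : Gad V → V
  | .inl v => v
  | .inr (.inl v) => v
  | .inr (.inr v) => v

/-- capped profile of an index -/
def prof (n B z : ℕ) : ℕ × ℕ := (min z B, min (n - 1 - z) B)

/-- classification of gadget vertices at threshold B -/
def clf (n B : ℕ) (w : Gad (Fin n)) : Fin 3 × ℕ × ℕ :=
  (letterOf w, prof n B (idxOf w).val)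

section adj
variable {V : Type} (E : V → V → Prop) (v u : V)

lemma adj_ss : gadE E (Sum.inl v) (Sum.inl u) ↔ False := by
  constructor
  · rintro (h | h) <;> cases h
  · exact False.elim

lemma adj_st : gadE E (Sum.inl v) (Sum.inr (Sum.inl u)) ↔ E v u := by
  constructor
  · rintro (h | h) <;> cases h; assumption
  · exact fun h => Or.inl (gadE0.st h)

lemma adj_si : gadE E (Sum.inl v) (Sum.inr (Sum.inr u)) ↔ v = u := by
  constructor
  · rintro (h | h) <;> cases h; rfl
  · rintro rfl; exact Or.inl (gadE0.si v)

lemma adj_ts : gadE E (Sum.inr (Sum.inl u)) (Sum.inl v) ↔ E v u := by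
  constructor
  · rintro (h | h) <;> cases h; assumption
  · exact fun h => Or.inr (gadE0.st h)

lemma adj_tt : gadE E (Sum.inr (Sum.inl v)) (Sum.inr (Sum.inl u)) ↔ False := by
  constructor
  · rintro (h | h) <;> cases h
  · exact False.elim

lemma adj_ti : gadE E (Sum.inr (Sum.inl v)) (Sum.inr (Sum.inr u)) ↔ u = v := by
  constructor
  · rintro (h | h) <;> cases h; rfl
  · rintro rfl; exact Or.inr (gadE0.it u)

lemma adj_is : gadE E (Sum.inr (Sum.inr u)) (Sum.inl v) ↔ v = u := by
  constructor
  · rintro (h | h) <;> cases h; rfl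
  · rintro rfl; exact Or.inr (gadE0.si v)

lemma adj_it : gadE E (Sum.inr (Sum.inr v)) (Sum.inr (Sum.inl u)) ↔ v = u := by
  constructor
  · rintro (h | h) <;> cases h; rfl
  · rintro rfl; exact Or.inl (gadE0.it v)

lemma adj_ii : gadE E (Sum.inr (Sum.inr v)) (Sum.inr (Sum.inr u)) ↔ False := by
  constructor
  · rintro (h | h) <;> cases h
  · exact False.elim

end adj

lemma feat_of_letter {V W : Type} {x : Gad V} {y : Gad W}
    (h : letterOf x = letterOf y) : gadf x = gadf y := by
  rcases x with v | v | v <;> rcases y with w | w | w <;>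
    simp_all [letterOf, gadf]

lemma snoc_inj {V : Type} {k : ℕ} {u : Fin k → V} (hu : Function.Injective u)
    (b : V) (hb : ∀ i, b ≠ u i) : Function.Injective (Fin.snoc u b : Fin (k+1) → V) := by
  intro i j h
  rcases Fin.eq_castSucc_or_eq_last i with ⟨i', rfl⟩ | rfl <;>
    rcases Fin.eq_castSucc_or_eq_last j with ⟨j', rfl⟩ | rfl <;>
      simp only [Fin.snoc_castSucc, Fin.snoc_last] at h
  · exact congrArg Fin.castSucc (hu h)
  · exact absurd h.symm (hb i')
  · exact absurd h (hb j')
  · rfl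

/-- the greedy matching lemma -/
lemma greedy {V : Type} {C : Type} (c : ℕ)
    (cl : V → C) (fG fH : V → Prop) (π : V → V) (hπ : Function.Injective π)
    (hq : ∀ v : V,
      (∀ w, cl w = cl v → (cl (π w) = cl w ∧ (fG w ↔ fH (π w)))) ∨
      ((∃ g : Fin c → V, Function.Injective g ∧ ∀ j, cl (g j) = cl v ∧ fH (g j)) ∧
       (∃ g : Fin c → V, Function.Injective g ∧ ∀ j, cl (g j) = cl v ∧ ¬ fH (g j)))) :
    ∀ k, k ≤ c → ∀ u₁ : Fin k → V, Function.Injective u₁ →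
      ∃ u₂ : Fin k → V, Function.Injective u₂ ∧
        ∀ i, cl (u₂ i) = cl (u₁ i) ∧ (fG (u₁ i) ↔ fH (u₂ i)) ∧
          ((∀ w, cl w = cl (u₁ i) → (cl (π w) = cl w ∧ (fG w ↔ fH (π w)))) → u₂ i = π (u₁ i)) := by
  intro k
  induction k with
  | zero =>
    intro _ u₁ _
    exact ⟨Fin.elim0, fun i => i.elim0, fun i => i.elim0⟩
  | succ k ih =>
    intro hk u₁ h₁
    obtain ⟨u₂', hinj', hcond'⟩ := ih (by omega) (u₁ ∘ Fin.castSucc)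
      (h₁.comp (Fin.castSucc_injective k))
    by_cases hP : (∀ w, cl w = cl (u₁ (Fin.last k)) →
        (cl (π w) = cl w ∧ (fG w ↔ fH (π w))))
    · have hb : ∀ i, π (u₁ (Fin.last k)) ≠ u₂' i := by
        intro i heq
        have h1 : cl (u₂' i) = cl (u₁ (Fin.castSucc i)) := (hcond' i).1
        have h2 : cl (π (u₁ (Fin.last k))) = cl (u₁ (Fin.last k)) :=
          (hP _ rfl).1
        have h3 : cl (u₁ (Fin.castSucc i)) = cl (u₁ (Fin.last k)) := by
          rw [← h1, ← heq, h2]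
        have h4 : u₂' i = π (u₁ (Fin.castSucc i)) :=
          (hcond' i).2.2 (fun w hw => hP w (by rw [← h3]; exact hw))
        have : u₁ (Fin.castSucc i) = u₁ (Fin.last k) := hπ (by rw [← h4, heq])
        exact absurd (h₁ this) (Fin.castSucc_lt_last i).ne
      refine ⟨Fin.snoc u₂' (π (u₁ (Fin.last k))), snoc_inj hinj' _ hb, ?_⟩
      intro i
      rcases Fin.eq_castSucc_or_eq_last i with ⟨i', rfl⟩ | rfl
      · simpa only [Fin.snoc_castSucc, Function.comp_apply] using hcond' i'
      · simp only [Fin.snoc_last]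
        exact ⟨(hP _ rfl).1, (hP _ rfl).2, fun _ => trivial⟩
    · have hbig := (hq (u₁ (Fin.last k))).resolve_left hP
      have hfresh : ∀ g : Fin c → V, Function.Injective g →
          ∃ j : Fin c, ∀ i : Fin k, g j ≠ u₂' i := by
        intro g hg
        by_contra h
        push_neg at h
        choose f hf using h
        have hfinj : Function.Injective f := by
          intro a b hab
          exact hg (by rw [hf a, hf b, hab])
        have := Fintype.card_le_of_injective f hfinj
        simp only [Fintype.card_fin] at this
        omega
      by_cases hfg : fG (u₁ (Fin.last k))
      · obtain ⟨g, hg, hgp⟩ := hbig.1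
        obtain ⟨j, hj⟩ := hfresh g hg
        refine ⟨Fin.snoc u₂' (g j), snoc_inj hinj' _ hj, ?_⟩
        intro i
        rcases Fin.eq_castSucc_or_eq_last i with ⟨i', rfl⟩ | rfl
        · simpa only [Fin.snoc_castSucc, Function.comp_apply] using hcond' i'
        · simp only [Fin.snoc_last]
          exact ⟨(hgp j).1, iff_of_true hfg (hgp j).2, fun h => absurd h hP⟩
      · obtain ⟨g, hg, hgp⟩ := hbig.2
        obtain ⟨j, hj⟩ := hfresh g hg
        refine ⟨Fin.snoc u₂' (g j), snoc_inj hinj' _ hj, ?_⟩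
        intro i
        rcases Fin.eq_castSucc_or_eq_last i with ⟨i', rfl⟩ | rfl
        · simpa only [Fin.snoc_castSucc, Function.comp_apply] using hcond' i'
        · simp only [Fin.snoc_last]
          exact ⟨(hgp j).1, iff_of_false hfg (hgp j).2, fun h => absurd h hP⟩

end S19
namespace S19

/-- the relation: strict order, plus a loop at `m` when `e = 1` -/
def relN (n m e : ℕ) : Fin n → Fin n → Prop :=
  fun u v => (u : ℕ) < (v : ℕ) ∨ (e = 1 ∧ (u : ℕ) = m ∧ (v : ℕ) = m)

lemma clf_eq_iff {n B : ℕ} {w w' : Gad (Fin n)} :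
    clf n B w = clf n B w' ↔
      (letterOf w = letterOf w' ∧ min (idxOf w).val B = min (idxOf w').val B ∧
       min (n - 1 - (idxOf w).val) B = min (n - 1 - (idxOf w').val) B) := by
  simp [clf, prof, Prod.ext_iff, and_assoc]

def πSwap {n : ℕ} (a b : Fin n) : Gad (Fin n) → Gad (Fin n) :=
  Sum.map (Equiv.swap a b) (Sum.map (Equiv.swap a b) (Equiv.swap a b))

lemma πSwap_inj {n : ℕ} (a b : Fin n) : Function.Injective (πSwap a b) :=
  Function.Injective.sumMap (Equiv.injective _)
    (Function.Injective.sumMap (Equiv.injective _) (Equiv.injective _))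

lemma swap_val {n : ℕ} (a b z : Fin n) :
    ((Equiv.swap a b z) : Fin n).val =
      if z.val = a.val then b.val else if z.val = b.val then a.val else z.val := by
  by_cases hza : z = a
  · subst hza
    simp [Equiv.swap_apply_left]
  · have h1 : z.val ≠ a.val := fun h => hza (Fin.ext h)
    rw [if_neg h1]
    by_cases hzb : z = b
    · subst hzb
      simp [Equiv.swap_apply_right]
    · have h2 : z.val ≠ b.val := fun h => hzb (Fin.ext h)
      rw [if_neg h2, Equiv.swap_apply_of_ne_of_ne hza hzb]

lemma letterOf_πSwap {n : ℕ} (a b : Fin n) (w : Gad (Fin n)) :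
    letterOf (πSwap a b w) = letterOf w := by
  rcases w with z | z | z <;> rfl

lemma idxOf_πSwap {n : ℕ} (a b : Fin n) (w : Gad (Fin n)) :
    idxOf (πSwap a b w) = Equiv.swap a b (idxOf w) := by
  rcases w with z | z | z <;> rfl

end S19
namespace S19

lemma idx_s {n : ℕ} (v : Fin n) : idxOf (Sum.inl v : Gad (Fin n)) = v := rfl
lemma idx_t {n : ℕ} (v : Fin n) : idxOf (Sum.inr (Sum.inl v) : Gad (Fin n)) = v := rfl
lemma idx_i {n : ℕ} (v : Fin n) : idxOf (Sum.inr (Sum.inr v) : Gad (Fin n)) = v := rfl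
lemma let_s {n : ℕ} (v : Fin n) : letterOf (Sum.inl v : Gad (Fin n)) = 0 := rfl
lemma let_t {n : ℕ} (v : Fin n) : letterOf (Sum.inr (Sum.inl v) : Gad (Fin n)) = 1 := rfl
lemma let_i {n : ℕ} (v : Fin n) : letterOf (Sum.inr (Sum.inr v) : Gad (Fin n)) = 2 := rfl
lemma πSwap_s {n : ℕ} (a b z : Fin n) :
    πSwap a b (Sum.inl z) = Sum.inl (Equiv.swap a b z) := rfl
lemma πSwap_t {n : ℕ} (a b z : Fin n) :
    πSwap a b (Sum.inr (Sum.inl z)) = Sum.inr (Sum.inl (Equiv.swap a b z)) := rfl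
lemma πSwap_i {n : ℕ} (a b z : Fin n) :
    πSwap a b (Sum.inr (Sum.inr z)) = Sum.inr (Sum.inr (Equiv.swap a b z)) := rfl
lemma val_mk {n a : ℕ} (h : a < n) : ((⟨a, h⟩ : Fin n) : ℕ) = a := rfl

end S19
namespace S19

set_option maxHeartbeats 1000000 in
lemma hqGen (c n m B e₁ e₂ : ℕ)
    (hBm : B + (c+1) ≤ m) (hmn : m + B + (c+1) + 1 ≤ n)
    (x y : Gad (Fin n)) (hxy : clf n (B + (c+1)) x = clf n (B + (c+1)) y)
    (w₀ : Gad (Fin n)) :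
    (∀ w, clf n B w = clf n B w₀ →
        (clf n B (πSwap (idxOf x) (idxOf y) w) = clf n B w ∧
         (gadE (relN n m e₁) x w ↔ gadE (relN n m e₂) y (πSwap (idxOf x) (idxOf y) w)))) ∨
    ((∃ g : Fin c → Gad (Fin n), Function.Injective g ∧
        ∀ j, clf n B (g j) = clf n B w₀ ∧ gadE (relN n m e₂) y (g j)) ∧
     (∃ g : Fin c → Gad (Fin n), Function.Injective g ∧
        ∀ j, clf n B (g j) = clf n B w₀ ∧ ¬ gadE (relN n m e₂) y (g j))) := by
  obtain ⟨hlet, hmin1, hmin2⟩ := clf_eq_iff.mp hxy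
  clear hxy
  have hxlt := (idxOf x).isLt
  have hylt := (idxOf y).isLt
  have hw0lt := (idxOf w₀).isLt
  have hclπ : ∀ w, clf n B (πSwap (idxOf x) (idxOf y) w) = clf n B w := by
    intro w
    rw [clf_eq_iff]
    refine ⟨letterOf_πSwap _ _ _, ?_, ?_⟩ <;>
      · rw [idxOf_πSwap, swap_val]
        split_ifs <;> omega
  rcases x with xv | xv | xv <;> rcases y with yv | yv | yv <;>
      simp only [let_s, let_t, let_i, idx_s, idx_t, idx_i] at hlet hmin1 hmin2 hxlt hylt hclπ ⊢ <;>
    try exact absurd hlet (by decide)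
  -- case x = gs xv, y = gs yv
  · by_cases hb : min (idxOf w₀).val B = B ∧ min (n - 1 - (idxOf w₀).val) B = B ∧
        B + (c+1) ≤ yv.val ∧ yv.val + (B + (c+1)) + 1 ≤ n ∧ letterOf w₀ = 1
    · right
      obtain ⟨hb1, hb2, hb3, hb4, hb5⟩ := hb
      clear hmin1 hmin2 hclπ
      constructor
      · refine ⟨fun j => Sum.inr (Sum.inl ⟨yv.val + 1 + j.val, by omega⟩), ?_, ?_⟩
        · intro j j' hjj
          simp only [Sum.inr.injEq, Sum.inl.injEq, Fin.mk.injEq] at hjj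
          exact Fin.ext (by omega)
        · intro j
          have hj := j.isLt
          refine ⟨clf_eq_iff.mpr ⟨by rw [hb5]; rfl, ?_, ?_⟩, ?_⟩
          · simp only [idx_t, val_mk]; omega
          · simp only [idx_t, val_mk]; omega
          · rw [adj_st]
            exact Or.inl (by simp only [val_mk]; omega)
      · refine ⟨fun j => Sum.inr (Sum.inl ⟨yv.val - 1 - j.val, by omega⟩), ?_, ?_⟩
        · intro j j' hjj
          simp only [Sum.inr.injEq, Sum.inl.injEq, Fin.mk.injEq] at hjj
          exact Fin.ext (by omega)
        · intro j
          have hj := j.isLt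
          refine ⟨clf_eq_iff.mpr ⟨by rw [hb5]; rfl, ?_, ?_⟩, ?_⟩
          · simp only [idx_t, val_mk]; omega
          · simp only [idx_t, val_mk]; omega
          · rw [adj_st]
            simp only [relN, val_mk]
            omega
    · left
      intro w hw
      rw [clf_eq_iff] at hw
      obtain ⟨hwl, hwm1, hwm2⟩ := hw
      refine ⟨hclπ w, ?_⟩
      clear hclπ
      rcases w with z | z | z
      · rw [πSwap_s, adj_ss, adj_ss]
      · have hzlt := z.isLt
        have hwl' : letterOf w₀ = 1 := by rw [← hwl]; rfl
        simp only [idx_t] at hwm1 hwm2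
        have hd1 : xv.val = yv.val ∨ (B+(c+1) ≤ xv.val ∧ xv.val + (B+(c+1)) + 1 ≤ n ∧
            B+(c+1) ≤ yv.val ∧ yv.val + (B+(c+1)) + 1 ≤ n) := by
          clear hwm1 hwm2 hb hwl hwl'
          omega
        have hd2 : z.val < B ∨ n - 1 - z.val < B ∨
            ¬(B + (c+1) ≤ yv.val ∧ yv.val + (B+(c+1)) + 1 ≤ n) := by
          by_contra hcon
          apply hb
          refine ⟨?_, ?_, ?_, ?_, hwl'⟩ <;>
          · clear hb hmin1 hmin2 hwl hwl'
            omega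
        clear hb hwl hwl' hwm1 hwm2 hmin1 hmin2
        rw [πSwap_t, adj_st, adj_st]
        simp only [relN, swap_val]
        split_ifs <;> omega
      · clear hb hwl hwm1 hwm2 hmin1 hmin2
        rw [πSwap_i, adj_si, adj_si]
        simp only [Fin.ext_iff, swap_val]
        split_ifs <;> omega
  -- case x = gt xv, y = gt yv
  · by_cases hb : min (idxOf w₀).val B = B ∧ min (n - 1 - (idxOf w₀).val) B = B ∧
        B + (c+1) ≤ yv.val ∧ yv.val + (B + (c+1)) + 1 ≤ n ∧ letterOf w₀ = 0
    · right
      obtain ⟨hb1, hb2, hb3, hb4, hb5⟩ := hb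
      clear hmin1 hmin2 hclπ
      constructor
      · refine ⟨fun j => Sum.inl ⟨yv.val - 1 - j.val, by omega⟩, ?_, ?_⟩
        · intro j j' hjj
          simp only [Sum.inl.injEq, Fin.mk.injEq] at hjj
          exact Fin.ext (by omega)
        · intro j
          have hj := j.isLt
          refine ⟨clf_eq_iff.mpr ⟨by rw [hb5]; rfl, ?_, ?_⟩, ?_⟩
          · simp only [idx_s, val_mk]; omega
          · simp only [idx_s, val_mk]; omega
          · rw [adj_ts]
            exact Or.inl (by simp only [val_mk]; omega)
      · refine ⟨fun j => Sum.inl ⟨yv.val + 1 + j.val, by omega⟩, ?_, ?_⟩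
        · intro j j' hjj
          simp only [Sum.inl.injEq, Fin.mk.injEq] at hjj
          exact Fin.ext (by omega)
        · intro j
          have hj := j.isLt
          refine ⟨clf_eq_iff.mpr ⟨by rw [hb5]; rfl, ?_, ?_⟩, ?_⟩
          · simp only [idx_s, val_mk]; omega
          · simp only [idx_s, val_mk]; omega
          · rw [adj_ts]
            simp only [relN, val_mk]
            omega
    · left
      intro w hw
      rw [clf_eq_iff] at hw
      obtain ⟨hwl, hwm1, hwm2⟩ := hw
      refine ⟨hclπ w, ?_⟩
      clear hclπ
      rcases w with z | z | z
      · have hzlt := z.isLt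
        have hwl' : letterOf w₀ = 0 := by rw [← hwl]; rfl
        simp only [idx_s] at hwm1 hwm2
        have hd1 : xv.val = yv.val ∨ (B+(c+1) ≤ xv.val ∧ xv.val + (B+(c+1)) + 1 ≤ n ∧
            B+(c+1) ≤ yv.val ∧ yv.val + (B+(c+1)) + 1 ≤ n) := by
          clear hwm1 hwm2 hb hwl hwl'
          omega
        have hd2 : z.val < B ∨ n - 1 - z.val < B ∨
            ¬(B + (c+1) ≤ yv.val ∧ yv.val + (B+(c+1)) + 1 ≤ n) := by
          by_contra hcon
          apply hb
          refine ⟨?_, ?_, ?_, ?_, hwl'⟩ <;>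
          · clear hb hmin1 hmin2 hwl hwl'
            omega
        clear hb hwl hwl' hwm1 hwm2 hmin1 hmin2
        rw [πSwap_s, adj_ts, adj_ts]
        simp only [relN, swap_val]
        split_ifs <;> omega
      · rw [πSwap_t, adj_tt, adj_tt]
      · clear hb hwl hwm1 hwm2 hmin1 hmin2
        rw [πSwap_i, adj_ti, adj_ti]
        simp only [Fin.ext_iff, swap_val]
        split_ifs <;> omega
  -- case x = gi xv, y = gi yv
  · left
    intro w hw
    refine ⟨hclπ w, ?_⟩
    clear hclπ hw
    rcases w with z | z | z
    · clear hmin1 hmin2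
      rw [πSwap_s, adj_is, adj_is]
      simp only [Fin.ext_iff, swap_val]
      split_ifs <;> omega
    · clear hmin1 hmin2
      rw [πSwap_t, adj_it, adj_it]
      simp only [Fin.ext_iff, swap_val]
      split_ifs <;> omega
    · rw [πSwap_i, adj_ii, adj_ii]

end S19
namespace S19

def DG (n m e : ℕ) (hn : 0 < n) : DGraph :=
  { V := Fin n, nonemptyV := ⟨⟨0, hn⟩⟩, E := relN n m e }

lemma mainInd (c L n m : ℕ) (hn : 0 < n)
    (hm1 : (c+1)*(L+2) ≤ m) (hm2 : m + (c+1)*(L+2) < n) :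
    ∀ d, d ≤ L → ∀ x y : Gad (Fin n),
      clf n ((c+1)*(d+1)) x = clf n ((c+1)*(d+1)) y →
      uequiv c d (gadget (DG n m 0 hn)) (gadget (DG n m 1 hn)) x y := by
  intro d
  induction d with
  | zero =>
    intro _ x y hxy
    exact feat_of_letter (clf_eq_iff.mp hxy).1
  | succ d ih =>
    intro hd x y hxy
    have hdL : d ≤ L := by omega
    have hBeq : (c+1)*(d+1+1) = (c+1)*(d+1) + (c+1) := by ring
    rw [hBeq] at hxy
    have h1 : (c+1)*(d+1) + (c+1) ≤ (c+1)*(L+2) := by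
      calc (c+1)*(d+1) + (c+1) = (c+1)*(d+2) := by ring
        _ ≤ (c+1)*(L+2) := Nat.mul_le_mul_left _ (by omega)
    have hBm : (c+1)*(d+1) + (c+1) ≤ m := le_trans h1 hm1
    have hmn : m + ((c+1)*(d+1)) + (c+1) + 1 ≤ n := by omega
    refine ⟨feat_of_letter (clf_eq_iff.mp hxy).1, ?_, ?_⟩
    · intro k hk u₁ hinj
      obtain ⟨u₂, h2i, h2⟩ := greedy c (clf n ((c+1)*(d+1)))
        (gadE (relN n m 0) x) (gadE (relN n m 1) y)
        (πSwap (idxOf x) (idxOf y)) (πSwap_inj _ _)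
        (fun w₀ => hqGen c n m ((c+1)*(d+1)) 0 1 hBm hmn x y hxy w₀) k hk u₁ hinj
      exact ⟨u₂, h2i, fun i => ⟨(h2 i).2.1, ih hdL _ _ (h2 i).1.symm⟩⟩
    · intro k hk u₂ hinj
      obtain ⟨u₁, h1i, h1c⟩ := greedy c (clf n ((c+1)*(d+1)))
        (gadE (relN n m 1) y) (gadE (relN n m 0) x)
        (πSwap (idxOf y) (idxOf x)) (πSwap_inj _ _)
        (fun w₀ => hqGen c n m ((c+1)*(d+1)) 1 0 hBm hmn y x hxy.symm w₀) k hk u₂ hinj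
      exact ⟨u₁, h1i, fun i => ⟨(h1c i).2.1.symm, ih hdL _ _ (h1c i).1⟩⟩

end S19
/-- For all `L ≥ 0` and `c ≥ 0` there are a gadgetisation of a
strict linear order and a gadgetisation (over the same vertices and features) of
a directed graph that is not a strict linear order which are `≡^{L,c}`-equivalent
at every vertex. -/
theorem stmt19 (L c : ℕ) :
    ∃ (D : DGraph) (R' : D.V → D.V → Prop),
      IsSLO D.E ∧ ¬ IsSLO R' ∧
      ∀ x : Gad D.V, uequiv c L (gadget D) (gadget { D with E := R' }) x x := by
  have hA : 0 < (c+1)*(L+2) := by positivity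
  have hn : 0 < 4*((c+1)*(L+2)) := by omega
  refine ⟨S19.DG (4*((c+1)*(L+2))) (2*((c+1)*(L+2))) 0 hn,
    S19.relN (4*((c+1)*(L+2))) (2*((c+1)*(L+2))) 1, ?_, ?_, ?_⟩
  · show IsSLO (S19.relN (4*((c+1)*(L+2))) (2*((c+1)*(L+2))) 0)
    refine ⟨fun v h => ?_, fun u v w h1 h2 => ?_, fun u v huv => ?_⟩
    · simp only [S19.relN] at h
      omega
    · simp only [S19.relN] at h1 h2 ⊢
      omega
    · have : (u : ℕ) ≠ (v : ℕ) := fun h => huv (Fin.ext h)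
      simp only [S19.relN]
      omega
  · rintro ⟨hirr, -, -⟩
    exact hirr ⟨2*((c+1)*(L+2)), by omega⟩ (Or.inr ⟨rfl, rfl, rfl⟩)
  · intro x
    exact S19.mainInd c L (4*((c+1)*(L+2))) (2*((c+1)*(L+2))) hn (by omega) (by omega)
      L le_rfl x x rfl
end
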